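/- arXiv:1605.08597 — 5 statements merged into one kernel-verified Lean document; each statement's English description precedes it below -/
import Mathlib

section
/- The number of labelled trees on n vertices is n^(n-2) for all n ≥ 1 (Cayley's formula). -/
open SimpleGraph Finset

namespace Cayley

/-- degree of a vertex in an edge finset -/
def degE (E : Finset (Sym2 ℕ)) (v : ℕ) : ℕ := (E.filter (fun e => v ∈ e)).card

/-- the tree predicate on a finite vertex set `S ⊆ ℕ` with edge set `E`. -/
def IsTr (S : Finset ℕ) (E : Finset (Sym2 ℕ)) : Prop :=
  (∀ e ∈ E, ∀ x ∈ e, x ∈ S) ∧ (∀ e ∈ E, ¬ e.IsDiag) ∧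
  (∀ u ∈ S, ∀ v ∈ S, (fromEdgeSet (↑E : Set (Sym2 ℕ))).Reachable u v) ∧
  E.card + 1 = S.card

lemma adj_iff {E : Finset (Sym2 ℕ)} {a b : ℕ} :
    (fromEdgeSet (↑E : Set (Sym2 ℕ))).Adj a b ↔ s(a,b) ∈ E ∧ a ≠ b := by
  simp [fromEdgeSet_adj]

/-- walks stay in closed vertex sets -/
lemma walk_mem_closed {E : Finset (Sym2 ℕ)} {A : Set ℕ}
    (hA : ∀ u ∈ A, ∀ x, (fromEdgeSet (↑E : Set (Sym2 ℕ))).Adj u x → x ∈ A)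
    {u v : ℕ} (hu : u ∈ A) (p : (fromEdgeSet (↑E : Set (Sym2 ℕ))).Walk u v) : v ∈ A := by
  induction p with
  | nil => exact hu
  | cons h p ih => exact ih (hA _ hu _ h)

lemma deg_pos {S : Finset ℕ} {E : Finset (Sym2 ℕ)} (h : IsTr S E) (hS : 2 ≤ S.card)
    {v : ℕ} (hv : v ∈ S) : 1 ≤ degE E v := by
  obtain ⟨u, hu, huv⟩ : ∃ u ∈ S, u ≠ v := by
    by_contra hc
    push_neg at hc
    have : S ⊆ {v} := fun x hx => by simp [hc x hx]
    have := card_le_card this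
    simp at this; omega
  obtain ⟨p⟩ := h.2.2.1 v hv u hu
  cases p with
  | nil => exact absurd rfl huv.symm
  | cons hadj p =>
    rw [adj_iff] at hadj
    exact Finset.card_pos.mpr ⟨_, Finset.mem_filter.2 ⟨hadj.1, by simp⟩⟩


lemma handshake {S : Finset ℕ} {E : Finset (Sym2 ℕ)}
    (hsupp : ∀ e ∈ E, ∀ x ∈ e, x ∈ S) (hloop : ∀ e ∈ E, ¬ e.IsDiag) :
    ∑ v ∈ S, degE E v = 2 * E.card := by
  calc ∑ v ∈ S, degE E v = ∑ v ∈ S, ∑ e ∈ E, if v ∈ e then 1 else 0 := by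
        refine Finset.sum_congr rfl fun v _ => ?_
        rw [degE, Finset.card_filter]
    _ = ∑ e ∈ E, ∑ v ∈ S, if v ∈ e then 1 else 0 := Finset.sum_comm
    _ = ∑ _e ∈ E, 2 := by
        refine Finset.sum_congr rfl fun e he => ?_
        induction e with
        | _ a b =>
          have hab : a ≠ b := fun h => hloop _ he (by simp [h])
          have hset : (S.filter (fun v => v ∈ s(a,b))) = {a, b} := by
            ext x
            simp only [Finset.mem_filter, Sym2.mem_iff, Finset.mem_insert, Finset.mem_singleton]
            constructor
            · rintro ⟨-, h⟩; exact h
            · rintro (rfl|rfl) <;> exact ⟨hsupp _ he _ (by simp), by simp⟩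
          rw [← Finset.card_filter, hset,
            Finset.card_insert_of_notMem (by simp [hab]), Finset.card_singleton]
    _ = 2 * E.card := by rw [Finset.sum_const, smul_eq_mul, mul_comm]

/-- a tree with at least two vertices has a leaf -/
lemma exists_leaf {S : Finset ℕ} {E : Finset (Sym2 ℕ)} (h : IsTr S E) (hS : 2 ≤ S.card) :
    ∃ v ∈ S, degE E v = 1 := by
  by_contra hc
  push_neg at hc
  have h2 : ∀ v ∈ S, 2 ≤ degE E v := by
    intro v hv
    have h1 := deg_pos h hS hv
    have := hc v hv
    omega
  have := Finset.sum_le_sum h2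
  rw [handshake h.1 h.2.1, Finset.sum_const, smul_eq_mul] at this
  have hcard := h.2.2.2
  omega


lemma unique_edge_at {E : Finset (Sym2 ℕ)} {m : ℕ} (hdeg : degE E m = 1)
    {e f : Sym2 ℕ} (he : e ∈ E) (hme : m ∈ e) (hf : f ∈ E) (hmf : m ∈ f) : f = e := by
  have h1 : e ∈ E.filter (fun e => m ∈ e) := Finset.mem_filter.2 ⟨he, hme⟩
  have h2 : f ∈ E.filter (fun e => m ∈ e) := Finset.mem_filter.2 ⟨hf, hmf⟩
  exact Finset.card_le_one.1 (le_of_eq hdeg) _ h2 _ h1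

lemma reach_erase {E : Finset (Sym2 ℕ)} {m : ℕ} (hdeg : degE E m = 1)
    {e : Sym2 ℕ} (he : e ∈ E) (hme : m ∈ e) {w : ℕ} (hw : w ≠ m) :
    ∀ n u (p : (fromEdgeSet (↑E : Set (Sym2 ℕ))).Walk u w), p.length ≤ n → u ≠ m →
      (fromEdgeSet (↑(E.erase e) : Set (Sym2 ℕ))).Reachable u w := by
  intro n
  induction n with
  | zero =>
    intro u p hp _
    cases p with
    | nil => exact SimpleGraph.Reachable.refl _
    | cons h q => simp at hp
  | succ n ih =>
    intro u p hp hu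
    cases p with
    | nil => exact SimpleGraph.Reachable.refl _
    | cons hadj p' =>
      rename_i x
      by_cases hx : x = m
      · subst hx
        cases p' with
        | nil => exact absurd rfl hw
        | cons hadj2 p'' =>
          rename_i y
          rw [adj_iff] at hadj hadj2
          have h1 : s(u, x) = e := unique_edge_at hdeg he hme hadj.1 (by simp)
          have h2 : s(x, y) = e := unique_edge_at hdeg he hme hadj2.1 (by simp)
          have huy : u = y := by
            rw [← h2] at h1
            rw [Sym2.eq_iff] at h1
            rcases h1 with ⟨h1, -⟩ | ⟨h1, -⟩
            · exact absurd h1 hu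
            · exact h1
          subst huy
          exact ih u p'' (by simp at hp; omega) hu
      · have hadj' : (fromEdgeSet (↑(E.erase e) : Set (Sym2 ℕ))).Adj u x := by
          rw [adj_iff] at hadj ⊢
          refine ⟨Finset.mem_erase.2 ⟨?_, hadj.1⟩, hadj.2⟩
          intro hc
          rw [← hc] at hme
          rw [Sym2.mem_iff] at hme
          rcases hme with rfl | rfl
          · exact hu rfl
          · exact hx rfl
        exact hadj'.reachable.trans (ih x p' (by simp at hp; omega) hx)

/-- removing a leaf from a tree gives a tree -/
lemma remove_leaf {S : Finset ℕ} {E : Finset (Sym2 ℕ)} (h : IsTr S E) (hS : 2 ≤ S.card)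
    {m : ℕ} (hm : m ∈ S) (hdeg : degE E m = 1) {e : Sym2 ℕ} (he : e ∈ E) (hme : m ∈ e) :
    IsTr (S.erase m) (E.erase e) := by
  obtain ⟨hsupp, hloop, hconn, hcard⟩ := h
  refine ⟨fun f hf x hx => ?_, fun f hf => hloop f (Finset.mem_erase.1 hf).2, ?_, ?_⟩
  · rcases Finset.mem_erase.1 hf with ⟨hfe, hfE⟩
    refine Finset.mem_erase.2 ⟨?_, hsupp f hfE x hx⟩
    rintro rfl
    exact hfe (unique_edge_at hdeg he hme hfE hx)
  · intro u hu v hv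
    rcases Finset.mem_erase.1 hu with ⟨hum, huS⟩
    rcases Finset.mem_erase.1 hv with ⟨hvm, hvS⟩
    obtain ⟨p⟩ := hconn u huS v hvS
    exact reach_erase hdeg he hme hvm p.length u p le_rfl hum
  · rw [Finset.card_erase_of_mem he, Finset.card_erase_of_mem hm]
    omega

/-- attaching a new leaf to a tree gives a tree -/
lemma attach_leaf {S : Finset ℕ} {E : Finset (Sym2 ℕ)} (h : IsTr S E)
    {v j : ℕ} (hj : j ∈ S) (hv : v ∉ S) :
    IsTr (insert v S) (insert s(v,j) E) := by
  obtain ⟨hsupp, hloop, hconn, hcard⟩ := h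
  have hvj : v ≠ j := fun hc => hv (hc ▸ hj)
  have hnew : s(v,j) ∉ E := fun hc => hv (hsupp _ hc v (by simp))
  refine ⟨?_, ?_, ?_, ?_⟩
  · intro f hf x hx
    rcases Finset.mem_insert.1 hf with rfl | hfE
    · rw [Sym2.mem_iff] at hx
      rcases hx with rfl | rfl
      · exact Finset.mem_insert_self _ _
      · exact Finset.mem_insert_of_mem hj
    · exact Finset.mem_insert_of_mem (hsupp _ hfE _ hx)
  · intro f hf
    rcases Finset.mem_insert.1 hf with rfl | hfE
    · simp [Sym2.isDiag_iff_proj_eq, hvj]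
    · exact hloop _ hfE
  · have hmono : fromEdgeSet (↑E : Set (Sym2 ℕ)) ≤
        fromEdgeSet (↑(insert s(v,j) E) : Set (Sym2 ℕ)) := by
      apply fromEdgeSet_mono
      intro x hx
      simp only [Finset.coe_insert, Set.mem_insert_iff]
      right; exact hx
    have hreach : ∀ u ∈ S, ∀ w ∈ S,
        (fromEdgeSet (↑(insert s(v,j) E) : Set (Sym2 ℕ))).Reachable u w := by
      intro u hu w hw
      exact (hconn u hu w hw).mono hmono
    have hvr : (fromEdgeSet (↑(insert s(v,j) E) : Set (Sym2 ℕ))).Adj v j := by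
      rw [adj_iff]
      exact ⟨Finset.mem_insert_self _ _, hvj⟩
    intro u hu w hw
    rcases Finset.mem_insert.1 hu with rfl | huS <;>
      rcases Finset.mem_insert.1 hw with rfl | hwS
    · exact SimpleGraph.Reachable.refl _
    · exact hvr.reachable.trans (hreach j hj w hwS)
    · exact (hreach u huS j hj).trans hvr.symm.reachable
    · exact hreach u huS w hwS
  · rw [Finset.card_insert_of_notMem hnew, Finset.card_insert_of_notMem hv]
    omega


lemma degE_erase_of_mem {E : Finset (Sym2 ℕ)} {e : Sym2 ℕ} (he : e ∈ E) {x : ℕ} (hx : x ∈ e) :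
    degE (E.erase e) x = degE E x - 1 := by
  unfold degE
  rw [Finset.filter_erase, Finset.card_erase_of_mem (Finset.mem_filter.2 ⟨he, hx⟩)]

lemma degE_erase_of_not_mem {E : Finset (Sym2 ℕ)} {e : Sym2 ℕ} {x : ℕ} (hx : x ∉ e) :
    degE (E.erase e) x = degE E x := by
  unfold degE
  rw [Finset.filter_erase, Finset.erase_eq_of_notMem]
  intro hc
  exact hx (Finset.mem_filter.1 hc).2

lemma degE_insert_of_mem {E : Finset (Sym2 ℕ)} {e : Sym2 ℕ} (he : e ∉ E) {x : ℕ} (hx : x ∈ e) :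
    degE (insert e E) x = degE E x + 1 := by
  unfold degE
  rw [Finset.filter_insert, if_pos hx, Finset.card_insert_of_notMem]
  intro hc
  exact he (Finset.mem_filter.1 hc).1

lemma degE_insert_of_not_mem {E : Finset (Sym2 ℕ)} {e : Sym2 ℕ} {x : ℕ} (hx : x ∉ e) :
    degE (insert e E) x = degE E x := by
  unfold degE
  rw [Finset.filter_insert, if_neg hx]

/-- the Prüfer code of a tree -/
noncomputable def code (S : Finset ℕ) (E : Finset (Sym2 ℕ)) : List ℕ :=
  if hS : S.card ≤ 2 then []
  else
    if hL : (S.filter (fun v => degE E v = 1)).Nonempty then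
      let m := (S.filter (fun v => degE E v = 1)).min' hL
      if hF : (E.filter (fun e => m ∈ e)).Nonempty then
        (Sym2.Mem.other' ((Finset.mem_filter.1 hF.choose_spec).2)) ::
          code (S.erase m) (E.erase hF.choose)
      else []
    else []
termination_by S.card
decreasing_by
  exact Finset.card_erase_lt_of_mem
    (Finset.mem_filter.1 ((S.filter (fun v => degE E v = 1)).min'_mem hL)).1

/-- decoding a Prüfer sequence into a tree -/
noncomputable def decode : Finset ℕ → List ℕ → Finset (Sym2 ℕ)
  | S, [] =>
    if h : S.card = 2 then
      {s(S.min' (Finset.card_pos.1 (by omega)), S.max' (Finset.card_pos.1 (by omega)))}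
    else ∅
  | S, a :: s =>
    if hR : (S \ (a :: s).toFinset).Nonempty then
      insert s((S \ (a :: s).toFinset).min' hR, a)
        (decode (S.erase ((S \ (a :: s).toFinset).min' hR)) s)
    else ∅


lemma degE_le {E : Finset (Sym2 ℕ)} {v : ℕ} : degE E v ≤ E.card :=
  Finset.card_filter_le _ _

lemma code_step {S : Finset ℕ} {E : Finset (Sym2 ℕ)} (h : IsTr S E) (hS : 3 ≤ S.card) :
    ∃ (m j : ℕ) (e : Sym2 ℕ),
      m ∈ S ∧ degE E m = 1 ∧ (∀ v ∈ S, degE E v = 1 → m ≤ v) ∧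
      e ∈ E ∧ j ∈ S ∧ j ≠ m ∧ e = s(m,j) ∧
      code S E = j :: code (S.erase m) (E.erase e) ∧
      IsTr (S.erase m) (E.erase e) := by
  have hS2 : ¬ S.card ≤ 2 := by omega
  obtain ⟨v₀, hv₀S, hv₀⟩ := exists_leaf h (by omega)
  have hL : (S.filter (fun v => degE E v = 1)).Nonempty :=
    ⟨v₀, Finset.mem_filter.2 ⟨hv₀S, hv₀⟩⟩
  set L := S.filter (fun v => degE E v = 1) with hLdef
  set m := L.min' hL with hmdef
  have hmL : m ∈ L := L.min'_mem hL
  have hmS : m ∈ S := (Finset.mem_filter.1 hmL).1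
  have hmdeg : degE E m = 1 := (Finset.mem_filter.1 hmL).2
  have hF : (E.filter (fun e => m ∈ e)).Nonempty := by
    rw [← Finset.card_pos, ← degE]
    omega
  set e := hF.choose with hedef
  have heF : e ∈ E.filter (fun e => m ∈ e) := hF.choose_spec
  have heE : e ∈ E := (Finset.mem_filter.1 heF).1
  have hme : m ∈ e := (Finset.mem_filter.1 heF).2
  set j := Sym2.Mem.other' hme with hjdef
  have hspec : s(m, j) = e := Sym2.other_spec' hme
  have hjm : j ≠ m := by
    intro hc
    apply h.2.1 e heE
    rw [← hspec, hc]
    simp [Sym2.isDiag_iff_proj_eq]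
  have hjS : j ∈ S := h.1 e heE j (by rw [← hspec]; simp)
  refine ⟨m, j, e, hmS, hmdeg, ?_, heE, hjS, hjm, hspec.symm, ?_, ?_⟩
  · intro v hv hv1
    exact L.min'_le v (Finset.mem_filter.2 ⟨hv, hv1⟩)
  · rw [code]
    rw [dif_neg hS2, dif_pos hL, dif_pos hF]
  · exact remove_leaf h (by omega) hmS hmdeg heE hme

lemma code_base {S : Finset ℕ} {E : Finset (Sym2 ℕ)} (hS : S.card ≤ 2) : code S E = [] := by
  rw [code, dif_pos hS]

/-- length and membership characterization of the Prüfer code -/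
lemma code_mem : ∀ n (S : Finset ℕ) (E : Finset (Sym2 ℕ)), S.card = n → IsTr S E →
    2 ≤ S.card →
    (code S E).length + 2 = S.card ∧ ∀ v, v ∈ code S E ↔ (v ∈ S ∧ 2 ≤ degE E v) := by
  intro n
  induction n using Nat.strong_induction_on with
  | _ n ih =>
    intro S E hn h hS2
    by_cases hS3 : 3 ≤ S.card
    · obtain ⟨m, j, e, hmS, hmdeg, hmin, heE, hjS, hjm, hspec, hcode, h'⟩ := code_step h hS3
      have hcS' : (S.erase m).card = S.card - 1 := Finset.card_erase_of_mem hmS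
      have hS2' : 2 ≤ (S.erase m).card := by omega
      obtain ⟨ihlen, ihmem⟩ := ih (S.card - 1) (by omega) _ _ hcS' h' hS2'
      have hjdeg : 2 ≤ degE E j := by
        by_contra hc
        have hjd : degE E j = 1 := by
          have := deg_pos h hS2 hjS
          omega
        -- the walk from m can only reach {m, j}, contradicting |S| ≥ 3
        have hA : ∀ u ∈ ({m, j} : Set ℕ), ∀ x,
            (fromEdgeSet (↑E : Set (Sym2 ℕ))).Adj u x → x ∈ ({m, j} : Set ℕ) := by
          rintro u hu x hadj
          rw [adj_iff] at hadj
          simp only [Set.mem_insert_iff, Set.mem_singleton_iff] at hu ⊢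
          rcases hu with h0 | h0
          · have hadj1 : s(m, x) ∈ E := by rw [← h0]; exact hadj.1
            have h1 := unique_edge_at hmdeg heE (by rw [hspec]; simp) hadj1 (by simp)
            rw [hspec, Sym2.eq_iff] at h1
            rcases h1 with ⟨-, h2⟩ | ⟨-, h2⟩
            · exact Or.inr h2
            · exact Or.inl h2
          · have hadj1 : s(j, x) ∈ E := by rw [← h0]; exact hadj.1
            have h1 := unique_edge_at hjd heE (by rw [hspec]; simp) hadj1 (by simp)
            rw [hspec, Sym2.eq_iff] at h1
            rcases h1 with ⟨h2, -⟩ | ⟨-, h2⟩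
            · exact absurd h2 hjm
            · exact Or.inl h2
        have hsub : ∀ u ∈ S, u ∈ ({m, j} : Set ℕ) := by
          intro u hu
          obtain ⟨p⟩ := h.2.2.1 m hmS u hu
          exact walk_mem_closed hA (Or.inl rfl) p
        have : S ⊆ {m, j} := by
          intro u hu
          have h1 := hsub u hu
          simp only [Set.mem_insert_iff, Set.mem_singleton_iff] at h1
          simp only [Finset.mem_insert, Finset.mem_singleton]
          exact h1
        have := Finset.card_le_card this
        have : ({m, j} : Finset ℕ).card ≤ 2 := Finset.card_insert_le _ _ |>.trans (by simp)
        omega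
      constructor
      · rw [hcode]
        simp only [List.length_cons]
        omega
      · intro v
        rw [hcode, List.mem_cons, ihmem]
        by_cases hvm : v = m
        · subst hvm
          simp only [Finset.mem_erase, ne_eq, not_true_eq_false, false_and, or_false]
          constructor
          · rintro rfl; exact absurd rfl hjm
          · rintro ⟨-, hd⟩; omega
        · have hvS : v ∈ S.erase m ↔ v ∈ S := by simp [Finset.mem_erase, hvm]
          by_cases hvj : v = j
          · subst hvj
            simp only [true_or, true_iff]
            exact ⟨hjS, hjdeg⟩
          · have hve : v ∉ e := by
              rw [hspec, Sym2.mem_iff]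
              rintro (rfl | rfl)
              · exact hvm rfl
              · exact hvj rfl
            rw [degE_erase_of_not_mem hve, hvS]
            constructor
            · rintro (rfl | hh)
              · exact absurd rfl hvj
              · exact hh
            · exact fun hh => Or.inr hh
    · refine ⟨?_, ?_⟩
      · rw [code_base (by omega)]
        simp only [List.length_nil]
        omega
      · intro v
        rw [code_base (by omega)]
        simp only [List.not_mem_nil, false_iff, not_and, not_le]
        intro hv
        have : degE E v ≤ E.card := degE_le
        have := h.2.2.2
        omega


lemma min'_spec {T : Finset ℕ} (h : T.Nonempty) {m : ℕ} (hm : m ∈ T)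
    (hle : ∀ x ∈ T, m ≤ x) : T.min' h = m :=
  le_antisymm (Finset.min'_le _ _ hm) (hle _ (T.min'_mem h))

lemma tree_two {S : Finset ℕ} {E : Finset (Sym2 ℕ)} (h : IsTr S E) (hS : S.card = 2) :
    E = {s(S.min' (Finset.card_pos.1 (by omega)), S.max' (Finset.card_pos.1 (by omega)))} := by
  have hE1 : E.card = 1 := by have := h.2.2.2; omega
  obtain ⟨f, hf⟩ := Finset.card_eq_one.1 hE1
  subst hf
  induction f with
  | _ a b =>
    have hfE : s(a,b) ∈ ({s(a,b)} : Finset (Sym2 ℕ)) := Finset.mem_singleton_self _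
    have ha : a ∈ S := h.1 _ hfE a (by simp)
    have hb : b ∈ S := h.1 _ hfE b (by simp)
    have hab : a ≠ b := by
      intro hc
      exact h.2.1 _ hfE (by simp [Sym2.isDiag_iff_proj_eq, hc])
    have hmin := S.min'_mem (Finset.card_pos.1 (by omega : (0:ℕ) < S.card))
    have hmax := S.max'_mem (Finset.card_pos.1 (by omega : (0:ℕ) < S.card))
    have hlt : S.min' _ < S.max' _ := S.min'_lt_max'_of_card (by omega)
    have hSab : S = {a, b} := by
      refine (Finset.eq_of_subset_of_card_le ?_ ?_).symm
      · intro x hx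
        rcases Finset.mem_insert.1 hx with rfl | hx
        · exact ha
        · rw [Finset.mem_singleton] at hx; subst hx; exact hb
      · rw [hS, Finset.card_insert_of_notMem (by simp [hab]), Finset.card_singleton]
    have hsub : S ⊆ {a, b} := le_of_eq hSab
    have hmin2 := hsub hmin
    have hmax2 := hsub hmax
    simp only [Finset.mem_insert, Finset.mem_singleton] at hmin2 hmax2
    congr 1
    rcases hmin2 with h1 | h1 <;> rcases hmax2 with h2 | h2
    · exact absurd (h1 ▸ h2 ▸ hlt) (lt_irrefl _)
    · rw [h1, h2]
    · rw [h1, h2, Sym2.eq_swap]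
    · exact absurd (h1 ▸ h2 ▸ hlt) (lt_irrefl _)

lemma decode_code : ∀ n (S : Finset ℕ) (E : Finset (Sym2 ℕ)), S.card = n → IsTr S E →
    2 ≤ S.card → decode S (code S E) = E := by
  intro n
  induction n using Nat.strong_induction_on with
  | _ n ih =>
    intro S E hn h hS2
    by_cases hS3 : 3 ≤ S.card
    · obtain ⟨m, j, e, hmS, hmdeg, hmin, heE, hjS, hjm, hspec, hcode, h'⟩ := code_step h hS3
      obtain ⟨-, hmem⟩ := code_mem S.card S E rfl h hS2
      have hcS' : (S.erase m).card = S.card - 1 := Finset.card_erase_of_mem hmS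
      have hmR : m ∈ S \ (code S E).toFinset := by
        rw [Finset.mem_sdiff, List.mem_toFinset]
        refine ⟨hmS, fun hc => ?_⟩
        rw [hmem] at hc
        omega
      have hR : (S \ (code S E).toFinset).Nonempty := ⟨m, hmR⟩
      have hprop : ∀ x ∈ S \ (code S E).toFinset, m ≤ x := by
        intro x hx
        rw [Finset.mem_sdiff, List.mem_toFinset] at hx
        refine hmin _ hx.1 ?_
        have h1 := deg_pos h hS2 hx.1
        have h2 : ¬ 2 ≤ degE E x := fun hc => hx.2 ((hmem _).2 ⟨hx.1, hc⟩)
        omega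
      rw [hcode] at hmR hprop
      rw [hcode]
      rw [decode]
      have hR' : (S \ (j :: code (S.erase m) (E.erase e)).toFinset).Nonempty := ⟨m, hmR⟩
      rw [dif_pos hR']
      rw [min'_spec hR' hmR hprop]
      rw [ih (S.card - 1) (by omega) _ _ hcS' h' (by omega)]
      rw [← hspec, Finset.insert_erase heE]
    · have hS2' : S.card = 2 := by omega
      rw [code_base (by omega), decode, dif_pos hS2']
      exact (tree_two h hS2').symm

lemma degE_eq_zero_of_not_mem_supp {S' : Finset ℕ} {E : Finset (Sym2 ℕ)}
    (hsupp : ∀ e ∈ E, ∀ x ∈ e, x ∈ S') {m : ℕ} (hm : m ∉ S') : degE E m = 0 := by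
  rw [degE, Finset.card_eq_zero, Finset.filter_eq_empty_iff]
  intro f hf hc
  exact hm (hsupp f hf m hc)

lemma code_decode : ∀ (s : List ℕ) (S : Finset ℕ), s.length + 2 = S.card →
    (∀ x ∈ s, x ∈ S) → IsTr S (decode S s) ∧ code S (decode S s) = s := by
  intro s
  induction s with
  | nil =>
    intro S hlen _
    simp only [List.length_nil, zero_add] at hlen
    have hpos : (0:ℕ) < S.card := by omega
    rw [decode, dif_pos hlen.symm]
    have hmin := S.min'_mem (Finset.card_pos.1 hpos)
    have hmax := S.max'_mem (Finset.card_pos.1 hpos)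
    have hlt : S.min' _ < S.max' _ := S.min'_lt_max'_of_card (by omega)
    set a := S.min' (Finset.card_pos.1 hpos)
    set b := S.max' (Finset.card_pos.1 hpos)
    have hab : a ≠ b := ne_of_lt hlt
    have hSab : S = {a, b} := by
      refine (Finset.eq_of_subset_of_card_le ?_ ?_).symm
      · intro x hx
        rcases Finset.mem_insert.1 hx with rfl | hx
        · exact hmin
        · rw [Finset.mem_singleton] at hx; subst hx; exact hmax
      · rw [← hlen, Finset.card_insert_of_notMem (by simp [hab]), Finset.card_singleton]
    have hadj : (fromEdgeSet (↑({s(a,b)} : Finset (Sym2 ℕ)) : Set (Sym2 ℕ))).Adj a b := by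
      rw [adj_iff]; exact ⟨Finset.mem_singleton_self _, hab⟩
    refine ⟨⟨?_, ?_, ?_, ?_⟩, code_base (by omega)⟩
    · intro f hf x hx
      rw [Finset.mem_singleton] at hf; subst hf
      rw [Sym2.mem_iff] at hx
      rcases hx with rfl | rfl
      · exact hmin
      · exact hmax
    · intro f hf
      rw [Finset.mem_singleton] at hf; subst hf
      simp [Sym2.isDiag_iff_proj_eq, hab]
    · intro u hu v hv
      rw [hSab] at hu hv
      simp only [Finset.mem_insert, Finset.mem_singleton] at hu hv
      rcases hu with rfl | rfl <;> rcases hv with rfl | rfl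
      · exact SimpleGraph.Reachable.refl _
      · exact hadj.reachable
      · exact hadj.symm.reachable
      · exact SimpleGraph.Reachable.refl _
    · rw [Finset.card_singleton]; omega
  | cons a s ihs =>
    intro S hlen hent
    simp only [List.length_cons] at hlen
    have hS3 : 3 ≤ S.card := by omega
    have haS : a ∈ S := hent a List.mem_cons_self
    -- the new minimal vertex
    have hRcard : 0 < (S \ (a :: s).toFinset).card := by
      have h1 : (a :: s).toFinset.card ≤ s.length + 1 := by
        calc (a :: s).toFinset.card ≤ (a :: s).length := (a :: s).toFinset_card_le
          _ = s.length + 1 := by simp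
      have h2 := Finset.le_card_sdiff ((a :: s).toFinset) S
      have h3 : (S \ (a :: s).toFinset).card ≥ S.card - (s.length + 1) := by
        omega
      omega
    have hR : (S \ (a :: s).toFinset).Nonempty := Finset.card_pos.1 hRcard
    set m := (S \ (a :: s).toFinset).min' hR with hmdef
    have hmR : m ∈ S \ (a :: s).toFinset := Finset.min'_mem _ hR
    have hmS : m ∈ S := (Finset.mem_sdiff.1 hmR).1
    have hment : m ∉ (a :: s).toFinset := (Finset.mem_sdiff.1 hmR).2
    rw [List.mem_toFinset, List.mem_cons] at hment
    push_neg at hment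
    obtain ⟨hma, hms⟩ := hment
    have hS'card : s.length + 2 = (S.erase m).card := by
      rw [Finset.card_erase_of_mem hmS]; omega
    have hent' : ∀ x ∈ s, x ∈ S.erase m := by
      intro x hx
      refine Finset.mem_erase.2 ⟨fun hc => hms (hc ▸ hx), hent x (List.mem_cons_of_mem _ hx)⟩
    obtain ⟨h', hcode'⟩ := ihs (S.erase m) hS'card hent'
    set E' := decode (S.erase m) s with hE'def
    have haS' : a ∈ S.erase m := Finset.mem_erase.2 ⟨fun hc => hma hc.symm, haS⟩
    have hmS' : m ∉ S.erase m := Finset.notMem_erase _ _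
    have htree := attach_leaf h' haS' hmS'
    rw [Finset.insert_erase hmS] at htree
    -- decode S (a :: s) = insert s(m,a) E'
    have hdec : decode S (a :: s) = insert s(m,a) E' := by
      rw [decode, dif_pos hR]
    rw [hdec]
    refine ⟨htree, ?_⟩
    -- now show the code of the new tree is a :: s
    set E : Finset (Sym2 ℕ) := insert s(m,a) E' with hEdef
    have hnew : s(m,a) ∉ E' := by
      intro hc
      exact hmS' (h'.1 _ hc m (by simp))
    have hdegm : degE E m = 1 := by
      rw [hEdef, degE_insert_of_mem hnew (by simp),
        degE_eq_zero_of_not_mem_supp h'.1 hmS']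
    have hS2' : 2 ≤ (S.erase m).card := by omega
    obtain ⟨-, hmem'⟩ := code_mem (S.erase m).card _ _ rfl h' hS2'
    have hdeg_big : ∀ v ∈ S, v < m → 2 ≤ degE E v := by
      intro v hvS hvm
      have hvR : v ∉ S \ (a :: s).toFinset := by
        intro hc
        exact absurd (Finset.min'_le _ _ hc) (by omega)
      rw [Finset.mem_sdiff, List.mem_toFinset, List.mem_cons] at hvR
      push_neg at hvR
      rcases hvR hvS with rfl | hvs
      · -- v = a
        have h1 : 1 ≤ degE E' v := deg_pos h' hS2' haS'
        rw [hEdef, degE_insert_of_mem hnew (by simp)]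
        omega
      · -- v ∈ s
        have h1 : 2 ≤ degE E' v := by
          rw [← hcode'] at hvs
          exact ((hmem' v).1 hvs).2
        by_cases hve : v ∈ s(m, a)
        · rw [hEdef, degE_insert_of_mem hnew hve]; omega
        · rw [hEdef, degE_insert_of_not_mem hve]; omega
    obtain ⟨m₁, j₁, e₁, hm₁S, hm₁deg, hmin₁, he₁E, hj₁S, hj₁m, hspec₁, hcode₁, h₁'⟩ :=
      code_step htree hS3
    have hm₁ : m₁ = m := by
      have h1 : m₁ ≤ m := hmin₁ m hmS hdegm
      have h2 : ¬ m₁ < m := fun hc => by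
        have := hdeg_big m₁ hm₁S hc
        omega
      omega
    rw [hm₁] at hspec₁ hcode₁
    have hmaE : s(m, a) ∈ E := Finset.mem_insert_self _ _
    have he₁ : e₁ = s(m, a) :=
      unique_edge_at hdegm hmaE (by simp) he₁E (by rw [hspec₁]; simp)
    have hj₁ : j₁ = a := by
      rw [hspec₁] at he₁
      rw [Sym2.eq_iff] at he₁
      rcases he₁ with ⟨-, h2⟩ | ⟨h2, -⟩
      · exact h2
      · exact absurd h2 hma
    rw [hcode₁, hj₁, he₁]
    have hEer : E.erase s(m, a) = E' := Finset.erase_insert hnew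
    rw [hEer, hcode']


/-- lists of fixed length with entries in `S` are counted by `|S|^k` -/
lemma count_lists (S : Finset ℕ) (k : ℕ) :
    Nat.card {l : List ℕ // l.length = k ∧ ∀ x ∈ l, x ∈ S} = S.card ^ k := by
  have e : {l : List ℕ // l.length = k ∧ ∀ x ∈ l, x ∈ S} ≃ (Fin k → ↥S) := by
    refine ⟨fun l i => ⟨l.1.get ⟨i, by have h1 := l.2.1; have h2 := i.2; omega⟩, l.2.2 _ (l.1.get_mem _)⟩,
      fun f => ⟨List.ofFn (fun i => (f i : ℕ)), by simp, ?_⟩, ?_, ?_⟩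
    · intro x hx
      rw [List.mem_ofFn] at hx
      obtain ⟨i, rfl⟩ := hx
      exact (f i).2
    · rintro ⟨l, hlen, hmem⟩
      ext1
      refine List.ext_get (by simp [hlen]) ?_
      intro i h1 h2
      rw [List.get_ofFn]
      rfl
    · intro f
      funext i
      ext
      simp [List.get_ofFn]
  rw [Nat.card_congr e, Nat.card_eq_fintype_card, Fintype.card_fun,
    Fintype.card_coe, Fintype.card_fin]

/-- counting trees on a nonempty finite vertex set -/
lemma count_IsTr (S : Finset ℕ) (hS : S.Nonempty) :
    Nat.card {E : Finset (Sym2 ℕ) // IsTr S E} = S.card ^ (S.card - 2) := by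
  by_cases hS1 : S.card = 1
  · obtain ⟨v, hv⟩ := Finset.card_eq_one.1 hS1
    subst hv
    have huniq : ∀ E : Finset (Sym2 ℕ), IsTr {v} E ↔ E = ∅ := by
      intro E
      constructor
      · intro h
        have := h.2.2.2
        rw [Finset.card_singleton] at this
        rw [← Finset.card_eq_zero]
        omega
      · rintro rfl
        refine ⟨by simp, by simp, ?_, by simp⟩
        intro u hu w hw
        rw [Finset.mem_singleton] at hu hw
        subst hu; subst hw
        exact SimpleGraph.Reachable.refl _
    have : Unique {E : Finset (Sym2 ℕ) // IsTr {v} E} := by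
      refine ⟨⟨⟨∅, (huniq ∅).2 rfl⟩⟩, ?_⟩
      rintro ⟨E, hE⟩
      ext1
      exact (huniq E).1 hE
    rw [Nat.card_unique, Finset.card_singleton]
    norm_num
  · have hS2 : 2 ≤ S.card := by
      have := Finset.card_pos.2 hS
      omega
    have e : {E : Finset (Sym2 ℕ) // IsTr S E} ≃
        {l : List ℕ // l.length = S.card - 2 ∧ ∀ x ∈ l, x ∈ S} := by
      refine ⟨fun E => ⟨code S E.1, ?_, ?_⟩, fun l => ⟨decode S l.1, ?_⟩, ?_, ?_⟩
      · have := (code_mem S.card S E.1 rfl E.2 hS2).1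
        omega
      · intro x hx
        exact ((code_mem S.card S E.1 rfl E.2 hS2).2 x).1 hx |>.1
      · exact (code_decode l.1 S (by have := l.2.1; omega) l.2.2).1
      · rintro ⟨E, hE⟩
        ext1
        exact decode_code S.card S E rfl hE hS2
      · rintro ⟨l, hlen, hmem⟩
        ext1
        exact (code_decode l S (by omega) hmem).2
    rw [Nat.card_congr e, count_lists]


/-- pull a finite edge set on `ℕ` back to a graph on `Fin n` -/
def pull (n : ℕ) (E : Finset (Sym2 ℕ)) : SimpleGraph (Fin n) where
  Adj a b := a ≠ b ∧ s((a:ℕ), (b:ℕ)) ∈ E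
  symm := by constructor; rintro a b ⟨h1, h2⟩; exact ⟨h1.symm, by rwa [Sym2.eq_swap]⟩
  loopless := by constructor; rintro a ⟨h1, -⟩; exact h1 rfl

/-- push a graph on `Fin n` to an edge finset on `ℕ` -/
noncomputable def push (n : ℕ) (G : SimpleGraph (Fin n)) : Finset (Sym2 ℕ) :=
  G.edgeSet.toFinite.toFinset.image (Sym2.map Fin.val)

lemma mem_push {n : ℕ} {G : SimpleGraph (Fin n)} {f : Sym2 ℕ} :
    f ∈ push n G ↔ ∃ e ∈ G.edgeSet, Sym2.map Fin.val e = f := by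
  simp [push, Set.Finite.mem_toFinset]

lemma push_card {n : ℕ} {G : SimpleGraph (Fin n)} : (push n G).card = G.edgeSet.ncard := by
  rw [push, Finset.card_image_of_injective _ (Sym2.map.injective Fin.val_injective),
    Set.ncard_eq_toFinset_card _ G.edgeSet.toFinite]

lemma pull_push {n : ℕ} (G : SimpleGraph (Fin n)) : pull n (push n G) = G := by
  ext a b
  show a ≠ b ∧ s((a:ℕ), (b:ℕ)) ∈ push n G ↔ G.Adj a b
  constructor
  · rintro ⟨hne, hmem⟩
    obtain ⟨e, he, hmap⟩ := mem_push.1 hmem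
    induction e with
    | _ c d =>
      rw [SimpleGraph.mem_edgeSet] at he
      rw [Sym2.map_pair_eq, Sym2.eq_iff] at hmap
      rcases hmap with ⟨h1, h2⟩ | ⟨h1, h2⟩
      · rwa [← Fin.val_injective h1, ← Fin.val_injective h2]
      · exact (by rwa [← Fin.val_injective h1, ← Fin.val_injective h2] : G.Adj b a).symm
  · intro h
    exact ⟨h.ne, mem_push.2 ⟨s(a, b), h, Sym2.map_pair_eq _ _ _⟩⟩

lemma push_pull {n : ℕ} {E : Finset (Sym2 ℕ)}
    (hsupp : ∀ e ∈ E, ∀ x ∈ e, x ∈ Finset.range n) (hloop : ∀ e ∈ E, ¬ e.IsDiag) :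
    push n (pull n E) = E := by
  ext f
  rw [mem_push]
  constructor
  · rintro ⟨e, he, rfl⟩
    induction e with
    | _ a b =>
      rw [SimpleGraph.mem_edgeSet] at he
      rw [Sym2.map_pair_eq]
      exact he.2
  · intro hf
    induction f with
    | _ x y =>
      have hx : x < n := Finset.mem_range.1 (hsupp _ hf x (by simp))
      have hy : y < n := Finset.mem_range.1 (hsupp _ hf y (by simp))
      have hxy : x ≠ y := by
        intro hc
        exact hloop _ hf (by simp [Sym2.isDiag_iff_proj_eq, hc])
      refine ⟨s((⟨x, hx⟩ : Fin n), (⟨y, hy⟩ : Fin n)), ?_, Sym2.map_pair_eq _ _ _⟩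
      rw [SimpleGraph.mem_edgeSet]
      exact ⟨fun hc => hxy (congrArg Fin.val hc), hf⟩

lemma conn_push {n : ℕ} {G : SimpleGraph (Fin n)} (h : G.Connected) :
    ∀ u ∈ Finset.range n, ∀ v ∈ Finset.range n,
      (fromEdgeSet (↑(push n G) : Set (Sym2 ℕ))).Reachable u v := by
  intro u hu v hv
  rw [Finset.mem_range] at hu hv
  let φ : G →g fromEdgeSet (↑(push n G) : Set (Sym2 ℕ)) :=
    ⟨Fin.val, fun {a b} hab => adj_iff.2 ⟨mem_push.2 ⟨s(a, b), hab, Sym2.map_pair_eq _ _ _⟩,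
      fun hc => hab.ne (Fin.val_injective hc)⟩⟩
  exact (h.preconnected ⟨u, hu⟩ ⟨v, hv⟩).map φ

lemma reach_pull {n : ℕ} {E : Finset (Sym2 ℕ)}
    (hsupp : ∀ e ∈ E, ∀ x ∈ e, x ∈ Finset.range n) :
    ∀ {x y : ℕ} (_ : (fromEdgeSet (↑E : Set (Sym2 ℕ))).Walk x y) (hx : x < n) (hy : y < n),
      (pull n E).Reachable ⟨x, hx⟩ ⟨y, hy⟩ := by
  intro x y p
  induction p with
  | nil => intro hx hy; exact SimpleGraph.Reachable.refl _
  | cons hadj p ih =>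
    rename_i x z _
    intro hx hy
    rw [adj_iff] at hadj
    have hz : z < n := Finset.mem_range.1 (hsupp _ hadj.1 z (by simp))
    have hA : (pull n E).Adj ⟨x, hx⟩ ⟨z, hz⟩ :=
      ⟨fun hc => hadj.2 (congrArg Fin.val hc), hadj.1⟩
    exact hA.reachable.trans (ih hz hy)

end Cayley

/-- Cayley's formula: the number of labelled trees on `n ≥ 1` vertices, i.e. connected
simple graphs on `Fin n` with exactly `n - 1` edges, is `n ^ (n - 2)`. -/
theorem cayley_formula (n : ℕ) (hn : 1 ≤ n) :
    Nat.card {G : SimpleGraph (Fin n) // G.Connected ∧ G.edgeSet.ncard = n - 1} =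
      n ^ (n - 2) := by
  classical
  have hΦ : {G : SimpleGraph (Fin n) // G.Connected ∧ G.edgeSet.ncard = n - 1} ≃
      {E : Finset (Sym2 ℕ) // Cayley.IsTr (Finset.range n) E} := by
    refine ⟨fun G => ⟨Cayley.push n G.1, ?_, ?_, ?_, ?_⟩,
      fun E => ⟨Cayley.pull n E.1, ?_, ?_⟩, ?_, ?_⟩
    · intro f hf x hx
      obtain ⟨e, he, rfl⟩ := Cayley.mem_push.1 hf
      rw [Sym2.mem_map] at hx
      obtain ⟨y, -, rfl⟩ := hx
      exact Finset.mem_range.2 y.2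
    · intro f hf
      obtain ⟨e, he, rfl⟩ := Cayley.mem_push.1 hf
      rw [Sym2.isDiag_map Fin.val_injective]
      exact G.1.not_isDiag_of_mem_edgeSet he
    · exact Cayley.conn_push G.2.1
    · rw [Cayley.push_card, G.2.2, Finset.card_range]
      omega
    · haveI : Nonempty (Fin n) := ⟨⟨0, by omega⟩⟩
      refine SimpleGraph.Connected.mk ?_
      rintro ⟨x, hx⟩ ⟨y, hy⟩
      obtain ⟨p⟩ := E.2.2.2.1 x (Finset.mem_range.2 hx) y (Finset.mem_range.2 hy)
      exact Cayley.reach_pull E.2.1 p hx hy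
    · have h1 : (Cayley.pull n E.1).edgeSet.ncard = E.1.card := by
        rw [← Cayley.push_card, Cayley.push_pull E.2.1 E.2.2.1]
      rw [h1]
      have := E.2.2.2.2
      rw [Finset.card_range] at this
      omega
    · rintro ⟨G, hG⟩
      ext1
      exact Cayley.pull_push G
    · rintro ⟨E, hE⟩
      ext1
      exact Cayley.push_pull hE.1 hE.2.1
  rw [Nat.card_congr hΦ, Cayley.count_IsTr _ (by rw [Finset.nonempty_range_iff]; omega),
    Finset.card_range]
end

section
/- If T(z) is the exponential generating function of rooted labelled trees, then T satisfies T(z) = z·exp(T(z)) as an identity of formal power series. -/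
open PowerSeries

/-- The exponential generating function of rooted labelled trees,
`T(z) = Σ_{n≥1} n^{n-1} z^n / n!`, as a formal power series over `ℚ`. -/
noncomputable def rootedTreeGF : PowerSeries ℚ :=
  PowerSeries.mk fun n => if n = 0 then 0 else (n : ℚ) ^ (n - 1) / n.factorial

/-- Composition `exp ∘ f` for a formal power series `f` with zero constant term:
the coefficient of `z^n` in `Σ_{k≥0} f^k / k!` (only `k ≤ n` contribute). -/
noncomputable def expComp (f : PowerSeries ℚ) : PowerSeries ℚ :=
  PowerSeries.mk fun n =>
    ∑ k ∈ Finset.range (n + 1), (k.factorial : ℚ)⁻¹ * PowerSeries.coeff n (f ^ k)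

section AbelIdentity

open Finset Polynomial


lemma fwdDiff_iter_poly_eq_zero : ∀ (m : ℕ) (p : Polynomial ℚ), p.natDegree < m →
    (fwdDiff (1:ℚ))^[m] (fun y : ℚ => p.eval y) = 0 := by
  intro m
  induction m with
  | zero => intro p hp; exact absurd hp (Nat.not_lt_zero _)
  | succ m ih =>
    intro p hp
    have hstep : fwdDiff (1:ℚ) (fun y : ℚ => p.eval y)
        = fun y : ℚ => (p.comp (Polynomial.X + Polynomial.C 1) - p).eval y := by
      funext y
      simp [fwdDiff, eval_comp]
    rw [Function.iterate_succ_apply, hstep]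
    rcases eq_or_ne (p.comp (Polynomial.X + Polynomial.C 1) - p) 0 with h0 | h0
    · rw [h0]
      simp only [eval_zero]
      exact Function.iterate_fixed (by funext y; simp [fwdDiff]) m
    · apply ih
      rcases Nat.eq_zero_or_pos p.natDegree with hd | hd
      · obtain ⟨c, rfl⟩ := natDegree_eq_zero.mp hd
        simp at h0
      · have hp0 : p ≠ 0 := fun hh => by simp [hh] at hd
        have hndc : (p.comp (Polynomial.X + Polynomial.C 1)).natDegree = p.natDegree := by
          rw [natDegree_comp, natDegree_X_add_C, mul_one]
        have hne : p.comp (Polynomial.X + Polynomial.C 1) ≠ 0 := by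
          intro hcc
          rw [hcc, natDegree_zero] at hndc
          omega
        have hdc : (p.comp (Polynomial.X + Polynomial.C 1)).degree = p.degree := by
          rw [degree_eq_natDegree hne, degree_eq_natDegree hp0, hndc]
        have hlc : (p.comp (Polynomial.X + Polynomial.C 1)).leadingCoeff = p.leadingCoeff := by
          rw [leadingCoeff_comp (by rw [natDegree_X_add_C]; exact one_ne_zero),
            leadingCoeff_X_add_C, one_pow, mul_one]
        have hdeg : (p.comp (Polynomial.X + Polynomial.C 1) - p).degree < p.degree := by
          rw [← hdc]
          exact hdc ▸ degree_sub_lt hdc hne hlc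
        have := natDegree_lt_natDegree h0 hdeg
        omega

lemma alt_sum_poly (m : ℕ) (p : Polynomial ℚ) (hp : p.natDegree < m) :
    ∑ j ∈ range (m + 1), (-1 : ℚ) ^ (m - j) * (m.choose j) * p.eval (j : ℚ) = 0 := by
  have h := fwdDiff_iter_eq_sum_shift (1 : ℚ) (fun y : ℚ => p.eval y) m 0
  rw [fwdDiff_iter_poly_eq_zero m p hp, Pi.zero_apply] at h
  rw [← h.symm]
  refine Finset.sum_congr rfl fun j hj => ?_
  rw [zsmul_eq_mul]
  push_cast
  ring_nf

lemma pow_merge (j m : ℕ) (hj : j ≤ m + 1) :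
    ((j:ℚ) + 1) ^ (j - 1) * ((j:ℚ) + 1) ^ (m + 1 - j) = ((j:ℚ) + 1) ^ m := by
  cases j with
  | zero => simp
  | succ i =>
    rw [← pow_add]
    congr 1
    omega

lemma abel_poly : ∀ m : ℕ,
    ∑ j ∈ range (m + 1), Polynomial.C ((m.choose j : ℚ) * ((j:ℚ) + 1) ^ (j - 1)) *
        (Polynomial.X + Polynomial.C (((m - j : ℕ) : ℚ))) ^ (m - j)
      = (Polynomial.X + Polynomial.C ((m:ℚ) + 1)) ^ m := by
  intro m
  induction m with
  | zero => simp
  | succ m ih =>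
    set q : Polynomial ℚ := ∑ j ∈ range (m + 2), Polynomial.C (((m+1).choose j : ℚ) * ((j:ℚ) + 1) ^ (j - 1)) *
        (Polynomial.X + Polynomial.C (((m + 1 - j : ℕ) : ℚ))) ^ (m + 1 - j) with hq
    -- composed induction hypothesis
    have ihc : ∑ j ∈ range (m + 1), Polynomial.C ((m.choose j : ℚ) * ((j:ℚ) + 1) ^ (j - 1)) *
        (Polynomial.X + Polynomial.C (((m + 1 - j : ℕ) : ℚ))) ^ (m - j) = (Polynomial.X + Polynomial.C ((m:ℚ) + 2)) ^ m := by
      have h := congrArg (fun p : Polynomial ℚ => aeval (Polynomial.X + Polynomial.C (1:ℚ)) p) ih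
      simp only [map_sum, map_mul, map_pow, map_add, aeval_X, aeval_C, Polynomial.algebraMap_eq] at h
      calc ∑ j ∈ range (m + 1), Polynomial.C ((m.choose j : ℚ) * ((j:ℚ) + 1) ^ (j - 1)) *
            (Polynomial.X + Polynomial.C (((m + 1 - j : ℕ) : ℚ))) ^ (m - j)
          = ∑ j ∈ range (m + 1), Polynomial.C ((m.choose j : ℚ)) * (Polynomial.C (j:ℚ) + Polynomial.C 1) ^ (j-1) *
            (Polynomial.X + Polynomial.C (1:ℚ) + Polynomial.C (((m - j : ℕ) : ℚ))) ^ (m - j) := by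
            refine Finset.sum_congr rfl fun j hj => ?_
            have hjm : j ≤ m := by simpa [Nat.lt_succ_iff] using hj
            have hc : (((m + 1 - j : ℕ) : ℚ)) = 1 + ((m - j : ℕ) : ℚ) := by
              rw [Nat.cast_sub hjm, Nat.cast_sub (by omega : j ≤ m + 1)]
              push_cast
              ring
            rw [hc]
            simp only [map_mul, map_pow, map_add]
            ring
        _ = (Polynomial.X + Polynomial.C (1:ℚ) + (Polynomial.C (m:ℚ) + Polynomial.C 1)) ^ m := h
        _ = (Polynomial.X + Polynomial.C ((m:ℚ) + 2)) ^ m := by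
            rw [add_assoc, ← Polynomial.C_add, ← Polynomial.C_add]
            congr 2
            ring
    -- Polynomial.derivative computation
    have hd : Polynomial.derivative q = Polynomial.derivative ((Polynomial.X + Polynomial.C ((m:ℚ) + 2)) ^ (m + 1)) := by
      rw [Polynomial.derivative_pow, hq, Polynomial.derivative_sum]
      simp only [Polynomial.derivative_mul, Polynomial.derivative_C, zero_mul, zero_add, Polynomial.derivative_pow,
        Polynomial.derivative_add, Polynomial.derivative_X, Polynomial.derivative_C, add_zero, mul_one]
      rw [Finset.sum_range_succ, Nat.sub_self, Nat.cast_zero, C_0, zero_mul, mul_zero, add_zero]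
      have hterm : ∀ j ∈ range (m + 1),
          Polynomial.C (((m+1).choose j : ℚ) * ((j:ℚ) + 1) ^ (j - 1)) *
            (Polynomial.C (((m + 1 - j : ℕ)) : ℚ) * (Polynomial.X + Polynomial.C (((m + 1 - j : ℕ) : ℚ))) ^ (m + 1 - j - 1))
          = Polynomial.C ((m:ℚ) + 1) * (Polynomial.C ((m.choose j : ℚ) * ((j:ℚ) + 1) ^ (j - 1)) *
            (Polynomial.X + Polynomial.C (((m + 1 - j : ℕ) : ℚ))) ^ (m - j)) := by
        intro j hj
        have hjm : j ≤ m := by simpa [Nat.lt_succ_iff] using hj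
        have hexp : m + 1 - j - 1 = m - j := by omega
        have hchoose : (((m+1).choose j : ℚ)) * ((m + 1 - j : ℕ) : ℚ)
            = ((m:ℚ) + 1) * (m.choose j : ℚ) := by
          have h2 := congrArg (fun n : ℕ => (n : ℚ)) (Nat.choose_mul_succ_eq m j)
          push_cast [Nat.cast_sub (by omega : j ≤ m + 1)] at h2 ⊢
          linarith
        have hC := congrArg Polynomial.C hchoose
        rw [Polynomial.C_mul, Polynomial.C_mul] at hC
        rw [hexp, Polynomial.C_mul, Polynomial.C_mul]
        linear_combination (Polynomial.C (((j:ℚ) + 1) ^ (j - 1)) *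
          ((Polynomial.X + Polynomial.C (((m + 1 - j : ℕ) : ℚ))) ^ (m - j))) * hC
      rw [Finset.sum_congr rfl hterm, ← Finset.mul_sum, ihc,
        Nat.add_sub_cancel, Nat.cast_add, Nat.cast_one]
    -- conclude
    have hsub : q - (Polynomial.X + Polynomial.C ((m:ℚ) + 2)) ^ (m + 1)
        = Polynomial.C ((q - (Polynomial.X + Polynomial.C ((m:ℚ) + 2)) ^ (m + 1)).coeff 0) :=
      Polynomial.eq_C_of_derivative_eq_zero (by rw [Polynomial.derivative_sub, hd, sub_self])
    have heval := congrArg (fun p : Polynomial ℚ => p.eval (-(m:ℚ) - 2)) hsub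
    simp only [eval_sub, eval_pow, eval_add, eval_X, eval_C] at heval
    have hzero : (-(m:ℚ) - 2 + ((m:ℚ) + 2)) ^ (m + 1) = 0 := by
      rw [show (-(m:ℚ) - 2 + ((m:ℚ) + 2)) = 0 by ring, zero_pow (Nat.succ_ne_zero m)]
    have hevalq : q.eval (-(m:ℚ) - 2) = 0 := by
      rw [hq, eval_finset_sum]
      have hterm : ∀ j ∈ range (m + 2), (Polynomial.C (((m+1).choose j : ℚ) * ((j:ℚ) + 1) ^ (j - 1)) *
            (Polynomial.X + Polynomial.C (((m + 1 - j : ℕ) : ℚ))) ^ (m + 1 - j)).eval (-(m:ℚ) - 2)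
          = (-1 : ℚ) ^ (m + 1 - j) * (((m+1).choose j : ℚ)) * (((Polynomial.X : Polynomial ℚ) + Polynomial.C 1) ^ m).eval (j : ℚ) := by
        intro j hj
        have hjm : j ≤ m + 1 := by simpa [Nat.lt_succ_iff] using hj
        rw [eval_mul, eval_pow, eval_add, eval_X, eval_C, eval_C, eval_pow, eval_add, eval_X, eval_C]
        have hpt : (-(m:ℚ) - 2 + ((m + 1 - j : ℕ) : ℚ)) = -((j:ℚ) + 1) := by
          rw [Nat.cast_sub hjm]
          push_cast
          ring
        rw [hpt, neg_pow]
        have hm := pow_merge j m hjm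
        linear_combination ((-1:ℚ)^(m+1-j) * (((m+1).choose j : ℚ))) * hm
      rw [Finset.sum_congr rfl hterm]
      exact alt_sum_poly (m+1) ((Polynomial.X + Polynomial.C 1) ^ m)
        (by rw [natDegree_pow, natDegree_X_add_C]; omega)
    rw [hzero, sub_zero, hevalq] at heval
    have hfin : q - (Polynomial.X + Polynomial.C ((m:ℚ) + 2)) ^ (m + 1) = 0 := by
      rw [hsub, ← heval, map_zero]
    have hfin2 := sub_eq_zero.mp hfin
    rw [hfin2]
    congr 2
    push_cast
    ring

lemma ab1 (m : ℕ) : ∑ j ∈ range (m + 1),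
    (m.choose j : ℚ) * ((j:ℚ) + 1) ^ (j - 1) * ((1:ℚ) + ((m - j : ℕ) : ℚ)) ^ (m - j)
    = ((m:ℚ) + 2) ^ m := by
  have h := congrArg (fun p : Polynomial ℚ => p.eval 1) (abel_poly m)
  simp only [eval_finset_sum, eval_mul, eval_pow, eval_add, eval_X, eval_C] at h
  calc ∑ j ∈ range (m + 1),
      (m.choose j : ℚ) * ((j:ℚ) + 1) ^ (j - 1) * ((1:ℚ) + ((m - j : ℕ) : ℚ)) ^ (m - j)
      = (1 + ((m:ℚ) + 1)) ^ m := h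
    _ = ((m:ℚ) + 2) ^ m := by ring_nf

lemma key_term (n j : ℕ) (hj : j ≤ n) :
    ((((((n - j : ℕ)):ℚ) + 1) ^ (n - j) / ((n - j)+1).factorial) * ((((n - j : ℕ)):ℚ) + 1)) *
      (((j:ℚ) + 1) ^ j / (j + 1).factorial)
    = (n.choose j : ℚ) * ((j:ℚ) + 1) ^ (j - 1) * ((1:ℚ) + ((n - j : ℕ) : ℚ)) ^ (n - j)
        / n.factorial := by
  have hfact : ((n.factorial : ℚ)) = (n.choose j : ℚ) * j.factorial * (n - j).factorial := by
    exact_mod_cast congrArg (fun k : ℕ => (k : ℚ)) (Nat.choose_mul_factorial_mul_factorial hj).symm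
  have hpowj : ((j:ℚ) + 1) ^ j = ((j:ℚ) + 1) ^ (j - 1) * ((j:ℚ) + 1) := by
    cases j with
    | zero => simp
    | succ i => rw [← pow_succ]; norm_num
  have h1 : ((((n - j : ℕ)):ℚ) + 1) ^ (n - j) = ((1:ℚ) + ((n - j : ℕ) : ℚ)) ^ (n - j) := by
    ring_nf
  have e1 : ((((n - j) + 1)).factorial : ℚ) = ((((n - j) : ℕ):ℚ) + 1) * ((n - j).factorial : ℚ) := by
    rw [Nat.factorial_succ]
    push_cast
    ring
  have e2 : (((j + 1)).factorial : ℚ) = (((j : ℕ):ℚ) + 1) * ((j).factorial : ℚ) := by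
    rw [Nat.factorial_succ]
    push_cast
    ring
  have hne1 : ((n - j).factorial : ℚ) ≠ 0 := Nat.cast_ne_zero.mpr (Nat.factorial_ne_zero _)
  have hne2 : ((j).factorial : ℚ) ≠ 0 := Nat.cast_ne_zero.mpr (Nat.factorial_ne_zero _)
  have hne3 : ((n).factorial : ℚ) ≠ 0 := Nat.cast_ne_zero.mpr (Nat.factorial_ne_zero _)
  have hne4 : (((n - j : ℕ)):ℚ) + 1 ≠ 0 := by positivity
  have hne5 : ((j:ℚ)) + 1 ≠ 0 := by positivity
  have hne6 : ((n.choose j : ℕ):ℚ) ≠ 0 := Nat.cast_ne_zero.mpr (Nat.choose_pos hj).ne'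
  rw [eq_div_iff hne3, e1, e2, hfact, hpowj, h1]
  generalize ((n - j : ℕ) : ℚ) = A at hne4 ⊢
  generalize ((j : ℕ) : ℚ) = J at hne5 ⊢
  generalize ((n - j).factorial : ℚ) = F1 at hne1 ⊢
  generalize ((j.factorial : ℕ) : ℚ) = F2 at hne2 ⊢
  generalize ((n.choose j : ℕ) : ℚ) = CH at hne6 ⊢
  field_simp

lemma key_sum (n : ℕ) : ∑ p ∈ range (n + 1),
    ((((p:ℚ) + 1) ^ p / (p+1).factorial) * ((p:ℚ) + 1)) *
      ((((n - p : ℕ):ℚ) + 1) ^ (n - p) / ((n - p) + 1).factorial)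
    = (((n:ℚ) + 1 + 1) ^ (n+1) / (n + 2).factorial) * ((n:ℚ) + 1) := by
  rw [← Finset.sum_range_reflect]
  have hterm : ∀ j ∈ range (n + 1),
      ((((((n + 1 - 1 - j : ℕ)):ℚ) + 1) ^ (n + 1 - 1 - j) / ((n + 1 - 1 - j)+1).factorial) *
          ((((n + 1 - 1 - j : ℕ)):ℚ) + 1)) *
        ((((n - (n + 1 - 1 - j) : ℕ):ℚ) + 1) ^ (n - (n + 1 - 1 - j)) /
          ((n - (n + 1 - 1 - j)) + 1).factorial)
      = (n.choose j : ℚ) * ((j:ℚ) + 1) ^ (j - 1) * ((1:ℚ) + ((n - j : ℕ) : ℚ)) ^ (n - j)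
          / n.factorial := by
    intro j hj
    have hjn : j ≤ n := by
      simp only [Finset.mem_range] at hj
      omega
    have hidx : n + 1 - 1 - j = n - j := by omega
    rw [hidx, Nat.sub_sub_self hjn]
    exact key_term n j hjn
  rw [Finset.sum_congr rfl hterm, ← Finset.sum_div, ab1]
  have hfac2 : (((n + 2).factorial : ℕ) : ℚ) = ((n:ℚ)+2) * ((n:ℚ)+1) * (n.factorial : ℚ) := by
    rw [show n + 2 = (n+1)+1 from rfl, Nat.factorial_succ, Nat.factorial_succ]
    push_cast
    ring
  rw [hfac2]
  have hne3 : ((n.factorial : ℕ) : ℚ) ≠ 0 := Nat.cast_ne_zero.mpr (Nat.factorial_ne_zero _)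
  have h1 : ((n:ℚ)+1) ≠ 0 := by positivity
  have h2 : ((n:ℚ)+2) ≠ 0 := by positivity
  field_simp
  ring

end AbelIdentity

section PowerSeriesPart

open Finset

local notation "T" => rootedTreeGF

lemma constantCoeff_T : constantCoeff T = 0 := by
  rw [← coeff_zero_eq_constantCoeff]
  simp [rootedTreeGF]

lemma coeff_succ_T (a : ℕ) : coeff (a+1) T = ((a:ℚ) + 1) ^ a / (a+1).factorial := by
  simp only [rootedTreeGF, coeff_mk, Nat.succ_ne_zero, if_false, Nat.add_sub_cancel]
  push_cast
  ring

lemma coeff_pow_T_eq_zero {k a : ℕ} (h : a < k) : coeff a (T ^ k) = 0 := by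
  have hX : (X : ℚ⟦X⟧) ∣ T := X_dvd_iff.mpr constantCoeff_T
  exact X_pow_dvd_iff.mp (pow_dvd_pow_of_dvd hX k) a h

lemma coeff_expComp (n : ℕ) : coeff n (expComp T)
    = ∑ k ∈ range (n + 1), (k.factorial : ℚ)⁻¹ * coeff n (T ^ k) := by
  simp [expComp]

lemma expComp_deriv :
    PowerSeries.derivative ℚ (expComp T)
      = PowerSeries.derivative ℚ T * expComp T := by
  ext n
  rw [PowerSeries.coeff_derivative, PowerSeries.coeff_mul, coeff_expComp]
  have lhs_eq : (∑ k ∈ range (n + 1 + 1), (k.factorial : ℚ)⁻¹ * coeff (n+1) (T ^ k)) * ((n:ℚ) + 1)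
      = ∑ k ∈ range (n + 1), (k.factorial : ℚ)⁻¹ *
          coeff n (T ^ k * PowerSeries.derivative ℚ T) := by
    rw [Finset.sum_mul, Finset.sum_range_succ']
    have h0 : ((Nat.factorial 0 : ℚ))⁻¹ * coeff (n+1) (T ^ 0) * ((n:ℚ) + 1) = 0 := by
      simp [PowerSeries.coeff_one]
    rw [h0, add_zero]
    refine Finset.sum_congr rfl fun i hi => ?_
    have hder : coeff (n+1) (T ^ (i+1)) * ((n:ℚ)+1)
        = coeff n (PowerSeries.derivative ℚ (T ^ (i+1))) := by
      rw [PowerSeries.coeff_derivative]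
    have hlp : PowerSeries.derivative ℚ (T ^ (i+1))
        = (i+1) • (T ^ i • PowerSeries.derivative ℚ T) := by
      rw [Derivation.leibniz_pow, Nat.add_sub_cancel]
    have hfac : ((i+1).factorial : ℚ)⁻¹ * (((i:ℚ))+1) = ((i).factorial : ℚ)⁻¹ := by
      rw [Nat.factorial_succ]
      push_cast
      rw [mul_inv]
      have h1 : ((i:ℚ) + 1) ≠ 0 := by positivity
      field_simp
    rw [mul_assoc, hder, hlp, map_nsmul, nsmul_eq_mul, smul_eq_mul]
    push_cast
    rw [← mul_assoc, hfac]
  rw [lhs_eq]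
  have rhs_eq : ∑ ab ∈ antidiagonal n,
        coeff ab.1 (PowerSeries.derivative ℚ T) * coeff ab.2 (expComp T)
      = ∑ k ∈ range (n + 1), (k.factorial : ℚ)⁻¹ *
          coeff n (T ^ k * PowerSeries.derivative ℚ T) := by
    have step1 : ∀ ab ∈ antidiagonal n,
        coeff ab.1 (PowerSeries.derivative ℚ T) * coeff ab.2 (expComp T)
        = ∑ k ∈ range (n + 1),
            coeff ab.1 (PowerSeries.derivative ℚ T) * ((k.factorial : ℚ)⁻¹ * coeff ab.2 (T ^ k)) := by
      intro ab hab
      have hb : ab.2 ≤ n := Finset.HasAntidiagonal.antidiagonal.snd_le hab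
      rw [coeff_expComp, Finset.mul_sum]
      refine Finset.sum_subset (Finset.range_subset_range.mpr (by omega)) ?_
      intro k hk hk2
      have : ab.2 < k := by
        simp only [Finset.mem_range] at hk hk2
        omega
      rw [coeff_pow_T_eq_zero this, mul_zero, mul_zero]
    rw [Finset.sum_congr rfl step1, Finset.sum_comm]
    refine Finset.sum_congr rfl fun k hk => ?_
    rw [mul_comm (T ^ k) (PowerSeries.derivative ℚ T), PowerSeries.coeff_mul, Finset.mul_sum]
    exact Finset.sum_congr rfl fun ab hab => by ring
  rw [rhs_eq]

lemma e_eq : ∀ n : ℕ, coeff n (expComp T) = ((n:ℚ) + 1) ^ n / (n+1).factorial := by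
  intro n
  induction n using Nat.strong_induction_on with
  | _ n ih =>
    match n with
    | 0 => simp [coeff_expComp, PowerSeries.coeff_one]
    | Nat.succ m =>
      have hrec := congrArg (coeff m) expComp_deriv
      rw [PowerSeries.coeff_derivative, PowerSeries.coeff_mul,
        Finset.Nat.sum_antidiagonal_eq_sum_range_succ_mk] at hrec
      have hterm : ∀ p ∈ range (m + 1),
          coeff p (PowerSeries.derivative ℚ T) * coeff (m - p) (expComp T)
          = ((((p:ℚ) + 1) ^ p / (p+1).factorial) * ((p:ℚ) + 1)) *
              ((((m - p : ℕ):ℚ) + 1) ^ (m - p) / ((m - p) + 1).factorial) := by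
        intro p hp
        rw [PowerSeries.coeff_derivative, coeff_succ_T, ih (m - p) (by omega)]
      rw [Finset.sum_congr rfl hterm, key_sum] at hrec
      have hm1 : ((m:ℚ) + 1) ≠ 0 := by positivity
      have := mul_right_cancel₀ hm1 hrec
      rw [this]
      have h2 : Nat.succ m + 1 = m + 2 := rfl
      rw [h2]
      simp only [Nat.succ_eq_add_one]
      push_cast
      ring_nf

/-- The rooted-tree generating function satisfies `T(z) = z · exp(T(z))` as an identity
of formal power series over `ℚ`. -/
theorem rootedTreeGF_eq_X_mul_exp :
    rootedTreeGF = PowerSeries.X * expComp rootedTreeGF := by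
  ext n
  cases n with
  | zero =>
    rw [coeff_zero_eq_constantCoeff, map_mul, constantCoeff_X, zero_mul]
    exact constantCoeff_T
  | succ m =>
    rw [PowerSeries.coeff_succ_X_mul, coeff_succ_T, e_eq]

end PowerSeriesPart
end

section
/- The exponential generating function U(z) of labelled (unrooted) trees satisfies U(z) = T(z) − T(z)^2/2, where T(z) is the exponential generating function of rooted labelled trees. -/
open Finset Polynomial

section AbelAux

variable {R : Type*} [CommRing R]

lemma pow_succ_diff (y : R) (m : ℕ) :
    y^m - (y+1)^m = - ∑ i ∈ range m, (m.choose i : R) * y^i := by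
  have h := add_pow y 1 m
  rw [sum_range_succ] at h
  simp only [one_pow, mul_one, Nat.choose_self, Nat.cast_one] at h
  rw [h]
  have : ∑ i ∈ range m, y ^ i * (m.choose i:R) = ∑ i ∈ range m, (m.choose i:R) * y^i :=
    Finset.sum_congr rfl (fun i _ => mul_comm _ _)
  rw [this]; ring

/-- n-th finite difference of a polynomial of degree m < n vanishes. -/
lemma findiff : ∀ (n : ℕ), ∀ m < n, ∀ x : R,
    ∑ k ∈ range (n+1), (-1:R)^k * (n.choose k : R) * (x + k)^m = 0 := by
  intro n
  induction n with
  | zero => intro m hm; omega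
  | succ n ih =>
    intro m hm x
    set f : ℕ → R := fun k => (-1:R)^k * (n.choose k : R) * (x + k)^m with hf
    set g : ℕ → R := fun k => (-1:R)^k * ((n+1).choose k : R) * (x + k)^m with hg
    set h : ℕ → R := fun j => (-1:R)^(j+1) * (n.choose j : R) * (x + (j+1:ℕ))^m with hh
    have key : ∑ k ∈ range (n+2), g k
        = ∑ j ∈ range (n+1), (-1:R)^j * (n.choose j : R) * ((x + j)^m - ((x+1) + j)^m) := by
      have e1 : ∑ k ∈ range (n+2), g k = (∑ j ∈ range (n+1), g (j+1)) + g 0 :=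
        Finset.sum_range_succ' g (n+1)
      have e2 : ∀ j ∈ range (n+1), g (j+1) = f (j+1) + h j := by
        intro j _
        simp only [hf, hg, hh, Nat.choose_succ_succ]
        push_cast; ring
      have e3 : ∑ k ∈ range (n+2), f k = (∑ j ∈ range (n+1), f j) + f (n+1) :=
        Finset.sum_range_succ f (n+1)
      have e4 : f (n+1) = 0 := by
        simp only [hf, Nat.choose_succ_self, Nat.cast_zero]; ring
      have e5 : ∑ k ∈ range (n+2), f k = (∑ j ∈ range (n+1), f (j+1)) + f 0 :=
        Finset.sum_range_succ' f (n+1)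
      have e6 : (∑ j ∈ range (n+1), f (j+1)) + f 0 = ∑ j ∈ range (n+1), f j := by
        rw [← e5, e3, e4, add_zero]
      have e7 : g 0 = f 0 := by simp [hf, hg]
      rw [e1, Finset.sum_congr rfl e2, Finset.sum_add_distrib]
      rw [add_right_comm, e7, e6, ← Finset.sum_add_distrib]
      apply Finset.sum_congr rfl
      intro j _
      simp only [hf, hh]
      push_cast; ring
    rw [show ∑ k ∈ range (n+2), (-1:R)^k * ((n+1).choose k : R) * (x + k)^m
        = ∑ k ∈ range (n+2), g k from rfl, key]
    have expand : ∀ j ∈ range (n+1), (-1:R)^j * (n.choose j : R) * ((x + j)^m - ((x+1) + j)^m)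
        = ∑ i ∈ range m, -((m.choose i : R) * ((-1:R)^j * (n.choose j : R) * (x+j)^i)) := by
      intro j _
      have h2 : ((x+1) + (j:R)) = (x + j) + 1 := by ring
      rw [h2, pow_succ_diff, mul_neg, Finset.mul_sum, ← Finset.sum_neg_distrib]
      exact Finset.sum_congr rfl fun i _ => by ring
    rw [Finset.sum_congr rfl expand, Finset.sum_comm]
    apply Finset.sum_eq_zero
    intro i hi
    have hz := ih i (by simp only [mem_range] at hi; omega) x
    calc ∑ j ∈ range (n+1), -((m.choose i : R) * ((-1:R)^j * (n.choose j : R) * (x+j)^i))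
        = -((m.choose i : R) * ∑ j ∈ range (n+1), (-1:R)^j * (n.choose j : R) * (x+j)^i) := by
          rw [Finset.sum_neg_distrib, ← Finset.mul_sum]
      _ = 0 := by rw [hz]; ring

noncomputable def ab (k : ℕ) (x : ℚ[X]) : ℚ[X] := if k = 0 then 1 else x * (x + k)^(k-1)

lemma choose_id (n k : ℕ) : (n+1-k) * ((n+1).choose k) = (n+1) * (n.choose k) := by
  have h1 := Nat.choose_succ_right_eq (n+1) k
  have h2 := Nat.add_one_mul_choose_eq n k
  rw [mul_comm, ← h1, ← h2]

lemma abelF (n : ℕ) (x : ℚ[X]) :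
    ∑ k ∈ range (n+1), C ((n.choose k : ℚ[X]) * ab k x) * (X - C (k:ℚ[X]))^(n-k)
      = (X + C x)^n := by
  induction n with
  | zero => simp [ab]
  | succ n ih =>
    have hder : derivative (∑ k ∈ range (n+2),
        C (((n+1).choose k : ℚ[X]) * ab k x) * (X - C (k:ℚ[X]))^(n+1-k)
        - (X + C x)^(n+1)) = 0 := by
      rw [derivative_sub, derivative_sum]
      have step : ∀ k ∈ range (n+2),
          derivative (C (((n+1).choose k : ℚ[X]) * ab k x) * (X - C (k:ℚ[X]))^(n+1-k))
          = C ((n+1:ℕ) : ℚ[X]) * (C ((n.choose k : ℚ[X]) * ab k x) * (X - C (k:ℚ[X]))^(n-k)) := by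
        intro k hk
        rw [derivative_C_mul, derivative_pow, derivative_sub, derivative_X, derivative_C,
          sub_zero, mul_one]
        have he : (n+1-k) - 1 = n - k := by omega
        rw [he]
        have hc' : ((n+1-k : ℕ) : ℚ[X]) * (((n+1).choose k : ℚ[X]) * ab k x)
            = ((n+1:ℕ):ℚ[X]) * ((n.choose k : ℚ[X]) * ab k x) := by
          rw [← mul_assoc, ← Nat.cast_mul, choose_id, Nat.cast_mul, mul_assoc]
        calc C (((n+1).choose k : ℚ[X]) * ab k x) * (C ((n+1-k : ℕ):ℚ[X]) * (X - C (k:ℚ[X]))^(n-k))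
            = C (((n+1-k : ℕ):ℚ[X]) * (((n+1).choose k : ℚ[X]) * ab k x)) * (X - C (k:ℚ[X]))^(n-k) := by
              simp only [map_mul]; ring
          _ = C (((n+1:ℕ):ℚ[X]) * ((n.choose k : ℚ[X]) * ab k x)) * (X - C (k:ℚ[X]))^(n-k) := by
              rw [hc']
          _ = C ((n+1:ℕ) : ℚ[X]) * (C ((n.choose k : ℚ[X]) * ab k x) * (X - C (k:ℚ[X]))^(n-k)) := by
              simp only [map_mul]; ring
      rw [Finset.sum_congr rfl step, ← Finset.mul_sum, Finset.sum_range_succ]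
      have hz : C ((n.choose (n+1) : ℚ[X]) * ab (n+1) x) * (X - C ((n+1:ℕ):ℚ[X]))^(n-(n+1)) = 0 := by
        simp [Nat.choose_succ_self]
      rw [hz, add_zero, ih, derivative_pow, derivative_add, derivative_X, derivative_C,
        add_zero, mul_one, Nat.add_sub_cancel, sub_self]
    have heval : (∑ k ∈ range (n+2),
        C (((n+1).choose k : ℚ[X]) * ab k x) * (X - C (k:ℚ[X]))^(n+1-k)
        - (X + C x)^(n+1)).eval (- x) = 0 := by
      rw [eval_sub, eval_finset_sum]
      have step : ∀ k ∈ range (n+2),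
          (C (((n+1).choose k : ℚ[X]) * ab k x) * (X - C (k:ℚ[X]))^(n+1-k)).eval (- x)
          = (-1:ℚ[X])^(n+1) * (x * ((-1:ℚ[X])^k * (((n+1).choose k : ℚ[X]) * (x + k)^n))) := by
        intro k hk
        simp only [mem_range] at hk
        rw [eval_mul, eval_pow, eval_sub, eval_X, eval_C, eval_C]
        have hneg : (- x - (k:ℚ[X])) = -(x + (k:ℚ[X])) := by ring
        have hpow : (-(x + (k:ℚ[X])))^(n+1-k) = (-1:ℚ[X])^(n+1-k) * (x + (k:ℚ[X]))^(n+1-k) := by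
          rw [neg_pow]
        have hsign : (-1:ℚ[X])^(n+1-k) = (-1:ℚ[X])^(n+1) * (-1:ℚ[X])^k := by
          have h2 : n+1+k = (n+1-k) + 2*k := by omega
          have : (-1:ℚ[X])^(n+1) * (-1:ℚ[X])^k = (-1:ℚ[X])^(n+1+k) := by rw [← pow_add]
          rw [this, h2, pow_add, pow_mul]
          norm_num
        rw [hneg, hpow, hsign]
        rcases Nat.eq_zero_or_pos k with rfl | hk1
        · simp only [ab, if_pos rfl]
          push_cast
          ring
        · simp only [ab, if_neg (Nat.pos_iff_ne_zero.mp hk1)]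
          have hexp : (x + (k:ℚ[X]))^(k-1) * (x + (k:ℚ[X]))^(n+1-k) = (x + (k:ℚ[X]))^n := by
            rw [← pow_add]
            congr 1
            omega
          calc ((n+1).choose k : ℚ[X]) * (x * (x + (k:ℚ[X]))^(k-1)) * ((-1:ℚ[X])^(n+1) * (-1:ℚ[X])^k * (x + (k:ℚ[X]))^(n+1-k))
              = (-1:ℚ[X])^(n+1) * (x * ((-1:ℚ[X])^k * (((n+1).choose k : ℚ[X]) * ((x + (k:ℚ[X]))^(k-1) * (x + (k:ℚ[X]))^(n+1-k))))) := by ring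
            _ = _ := by rw [hexp]
      rw [Finset.sum_congr rfl step, ← Finset.mul_sum, ← Finset.mul_sum]
      have hfd := findiff (R := ℚ[X]) (n+1) n (by omega) x
      rw [show (∑ k ∈ range (n+2), (-1:ℚ[X])^k * (((n+1).choose k : ℚ[X]) * (x + (k:ℚ[X]))^n))
          = ∑ k ∈ range (n+2), (-1:ℚ[X])^k * ((n+1).choose k : ℚ[X]) * (x + (k:ℚ[X]))^n from
          Finset.sum_congr rfl fun k _ => by ring, hfd]
      rw [eval_pow, eval_add, eval_X, eval_C]
      simp
    set D := (∑ k ∈ range (n+2),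
        C (((n+1).choose k : ℚ[X]) * ab k x) * (X - C (k:ℚ[X]))^(n+1-k)
        - (X + C x)^(n+1)) with hD
    have hc : D = C (D.coeff 0) := eq_C_of_derivative_eq_zero hder
    have : D.coeff 0 = 0 := by
      have := congrArg (Polynomial.eval (- x)) hc
      rw [heval, eval_C] at this
      exact this.symm
    have hD0 : D = 0 := by rw [hc, this, map_zero]
    have := sub_eq_zero.mp hD0
    exact this

lemma abelG (n : ℕ) (x y : ℚ[X]) :
    ∑ k ∈ range (n+1), (n.choose k : ℚ[X]) * ab k x * (y + ((n-k : ℕ):ℚ[X]))^(n-k)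
      = (x + y + (n:ℚ[X]))^n := by
  have h := congrArg (Polynomial.eval (y + (n:ℚ[X]))) (abelF n x)
  rw [eval_finset_sum, eval_pow, eval_add, eval_X, eval_C] at h
  have step : ∀ k ∈ range (n+1),
      (C ((n.choose k : ℚ[X]) * ab k x) * (X - C (k:ℚ[X]))^(n-k)).eval (y + (n:ℚ[X]))
      = (n.choose k : ℚ[X]) * ab k x * (y + ((n-k:ℕ):ℚ[X]))^(n-k) := by
    intro k hk
    simp only [mem_range] at hk
    rw [eval_mul, eval_pow, eval_sub, eval_X, eval_C, eval_C]
    have hc : ((n-k:ℕ):ℚ[X]) = (n:ℚ[X]) - (k:ℚ[X]) := by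
      rw [Nat.cast_sub (by omega)]
    rw [hc]
    ring_nf
  rw [Finset.sum_congr rfl step] at h
  rw [h]; ring

lemma absplit (m : ℕ) (y : ℚ[X]) :
    (y + (m:ℚ[X]))^m = ab m y + (m:ℚ[X]) * (y + (m:ℚ[X]))^(m-1) := by
  rcases Nat.eq_zero_or_pos m with rfl | hm
  · simp [ab]
  · obtain ⟨j, rfl⟩ : ∃ j, m = j+1 := ⟨m-1, by omega⟩
    rw [pow_succ, show (j+1)-1 = j from rfl]
    simp only [ab, Nat.succ_ne_zero, if_neg (Nat.succ_ne_zero j), show (j+1)-1 = j from rfl]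
    push_cast
    ring

lemma abelConv (n : ℕ) (hn : 1 ≤ n) (x y : ℚ[X]) :
    ∑ k ∈ range (n+1), (n.choose k : ℚ[X]) * ab k x * ab (n-k) y
      = (x+y) * (x + y + (n:ℚ[X]))^(n-1) := by
  obtain ⟨m, rfl⟩ : ∃ m, n = m+1 := ⟨n-1, by omega⟩
  have hG := abelG (m+1) x y
  have hsplit : ∀ k ∈ range (m+2),
      ((m+1).choose k : ℚ[X]) * ab k x * (y + ((m+1-k:ℕ):ℚ[X]))^(m+1-k)
      = ((m+1).choose k : ℚ[X]) * ab k x * ab (m+1-k) y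
        + ((m+1).choose k : ℚ[X]) * ab k x *
          (((m+1-k:ℕ):ℚ[X]) * (y + ((m+1-k:ℕ):ℚ[X]))^((m+1-k)-1)) := by
    intro k _
    rw [absplit]
    ring
  rw [Finset.sum_congr rfl hsplit, Finset.sum_add_distrib] at hG
  have hsec : ∑ k ∈ range (m+2), ((m+1).choose k : ℚ[X]) * ab k x *
        (((m+1-k:ℕ):ℚ[X]) * (y + ((m+1-k:ℕ):ℚ[X]))^((m+1-k)-1))
      = ((m+1:ℕ):ℚ[X]) * (x + (y+1) + (m:ℚ[X]))^m := by
    rw [Finset.sum_range_succ]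
    have hlast : ((m+1).choose (m+1) : ℚ[X]) * ab (m+1) x *
        (((m+1-(m+1):ℕ):ℚ[X]) * (y + ((m+1-(m+1):ℕ):ℚ[X]))^((m+1-(m+1))-1)) = 0 := by
      simp
    rw [hlast, add_zero]
    have hterm : ∀ k ∈ range (m+1),
        ((m+1).choose k : ℚ[X]) * ab k x *
          (((m+1-k:ℕ):ℚ[X]) * (y + ((m+1-k:ℕ):ℚ[X]))^((m+1-k)-1))
        = ((m+1:ℕ):ℚ[X]) * ((m.choose k : ℚ[X]) * ab k x * ((y+1) + ((m-k:ℕ):ℚ[X]))^(m-k)) := by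
      intro k hk
      simp only [mem_range] at hk
      have h2 : ((m+1-k:ℕ):ℚ[X]) * (((m+1).choose k : ℚ[X])) = ((m+1:ℕ):ℚ[X]) * (m.choose k : ℚ[X]) := by
        rw [← Nat.cast_mul, choose_id, Nat.cast_mul]
      have h3 : (y + ((m+1-k:ℕ):ℚ[X])) = ((y+1) + ((m-k:ℕ):ℚ[X])) := by
        rw [show m+1-k = (m-k)+1 by omega]
        push_cast
        ring
      rw [h3, show (m+1-k)-1 = m-k by omega]
      calc ((m+1).choose k : ℚ[X]) * ab k x *
            (((m+1-k:ℕ):ℚ[X]) * ((y+1) + ((m-k:ℕ):ℚ[X]))^(m-k))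
          = (((m+1-k:ℕ):ℚ[X]) * (((m+1).choose k : ℚ[X]))) *
            (ab k x * ((y+1) + ((m-k:ℕ):ℚ[X]))^(m-k)) := by ring
        _ = ((m+1:ℕ):ℚ[X]) * ((m.choose k : ℚ[X]) * ab k x * ((y+1) + ((m-k:ℕ):ℚ[X]))^(m-k)) := by
            rw [h2]; ring
    rw [Finset.sum_congr rfl hterm, ← Finset.mul_sum, abelG m x (y+1)]
  rw [hsec] at hG
  have hxy : (x + (y+1) + (m:ℚ[X])) = (x + y + ((m+1:ℕ):ℚ[X])) := by push_cast; ring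
  rw [hxy] at hG
  have hfin := eq_sub_of_add_eq hG
  rw [hfin, show (m+1)-1 = m from rfl]
  have hpow : (x + y + ((m+1:ℕ):ℚ[X]))^(m+1)
      = (x + y + ((m+1:ℕ):ℚ[X]))^m * (x + y + ((m+1:ℕ):ℚ[X])) := pow_succ _ _
  rw [hpow]
  push_cast
  ring

noncomputable def cc (j : ℕ) : ℚ := if j = 0 then 0 else (j:ℚ)^(j-1)

lemma ab_coeff_two (m : ℕ) (hm : 1 ≤ m) :
    (ab m X).coeff 2 = ((m-1:ℕ):ℚ) * (m:ℚ)^(m-2) := by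
  rw [ab, if_neg (by omega)]
  rw [show ((m:ℕ):ℚ[X]) = C ((m:ℕ):ℚ) from (C_eq_natCast _)]
  rw [show (2:ℕ) = 1+1 from rfl, coeff_X_mul, coeff_X_add_C_pow]
  rw [show m-1-1 = m-2 by omega, Nat.choose_one_right]
  ring

lemma key (n : ℕ) (hn : 1 ≤ n) :
    ∑ k ∈ range (n+1), (n.choose k : ℚ) * cc k * cc (n-k)
      = 2 * ((n-1:ℕ):ℚ) * (n:ℚ)^(n-2) := by
  set A : ℚ := ((n-1:ℕ):ℚ) * (n:ℚ)^(n-2) with hA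
  have h := congrArg (fun p : ℚ[X] => p.coeff 2) (abelConv n hn X X)
  rw [finset_sum_coeff] at h
  have hterm : ∀ k ∈ range (n+1),
      ((n.choose k : ℚ[X]) * ab k X * ab (n-k) X).coeff 2
      = ((n.choose k : ℚ) * cc k * cc (n-k) + (if k = 0 then A else 0))
        + (if k = n then A else 0) := by
    intro k hk
    simp only [mem_range] at hk
    rw [show ((n.choose k : ℕ):ℚ[X]) = C ((n.choose k : ℕ):ℚ) from (C_eq_natCast _),
      mul_assoc, coeff_C_mul]
    rcases Nat.eq_zero_or_pos k with rfl | hk1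
    · rw [show ab 0 X = 1 from if_pos rfl, one_mul, Nat.sub_zero]
      rw [ab_coeff_two n hn]
      simp only [cc, hA, if_true, if_neg (by omega : ¬ (0 = n))]
      norm_num
    · rcases eq_or_ne k n with rfl | hkn
      · rw [Nat.sub_self, show ab 0 X = 1 from if_pos rfl, mul_one]
        rw [ab_coeff_two k hk1]
        simp [cc, hA, Nat.pos_iff_ne_zero.mp hk1]
      · -- 1 ≤ k ≤ n-1
        have hk2 : k ≤ n := by omega
        have hnk : n - k ≠ 0 := by omega
        rw [ab, if_neg (by omega), ab, if_neg hnk]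
        have hprod : X * (X + ((k:ℕ):ℚ[X]))^(k-1) * (X * (X + (((n-k):ℕ):ℚ[X]))^(n-k-1))
            = X^2 * ((X + ((k:ℕ):ℚ[X]))^(k-1) * (X + (((n-k):ℕ):ℚ[X]))^(n-k-1)) := by
          ring
        rw [hprod, show (2:ℕ) = 0+2 from rfl, coeff_X_pow_mul, mul_coeff_zero]
        rw [show ((k:ℕ):ℚ[X]) = C ((k:ℕ):ℚ) from (C_eq_natCast _),
          show (((n-k):ℕ):ℚ[X]) = C (((n-k):ℕ):ℚ) from (C_eq_natCast _),
          coeff_zero_eq_eval_zero, coeff_zero_eq_eval_zero, eval_pow, eval_pow,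
          eval_add, eval_add, eval_X, eval_C, eval_C, zero_add, zero_add]
        rw [if_neg (by omega), if_neg hkn]
        simp only [cc, if_neg (Nat.pos_iff_ne_zero.mp hk1), if_neg hnk]
        ring
  rw [Finset.sum_congr rfl hterm] at h
  rw [Finset.sum_add_distrib, Finset.sum_add_distrib] at h
  rw [Finset.sum_ite_eq' (range (n+1)) 0 (fun _ => A),
    Finset.sum_ite_eq' (range (n+1)) n (fun _ => A)] at h
  rw [if_pos (by simp), if_pos (by simp [mem_range])] at h
  -- compute RHS coefficient
  have hR : ((X+X) * (X + X + ((n:ℕ):ℚ[X]))^(n-1)).coeff 2 = 4 * A := by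
    set q : ℚ[X] := (X + X + ((n:ℕ):ℚ[X]))^(n-1) with hq
    have e1 : (X+X) * q = X * (q + q) := by ring
    have e2 : q.coeff 1 = ((n-1:ℕ):ℚ) * ((n:ℕ):ℚ)^(n-2) * 2 := by
      have hd : (derivative q).coeff 0 = q.coeff 1 * (0+1) := coeff_derivative q 0
      norm_num at hd
      rw [← hd, hq, derivative_pow]
      rw [show derivative (X + X + ((n:ℕ):ℚ[X])) = 1 + 1 + 0 by
        rw [derivative_add, derivative_add, derivative_X, derivative_natCast]]
      rw [coeff_zero_eq_eval_zero]
      rw [show n-1-1 = n-2 by omega]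
      simp only [eval_mul, eval_add, eval_pow, eval_C, eval_X, eval_one, eval_zero,
        eval_natCast, zero_add, add_zero]
      ring
    rw [e1, show (2:ℕ) = 1+1 from rfl, coeff_X_mul, coeff_add, e2, hA]
    ring
  rw [hR] at h
  linarith [h]

end AbelAux

/-- The exponential generating function of (unrooted) labelled trees,
`U(z) = Σ_{n≥1} n^{n-2} z^n / n!`. -/
noncomputable def treeGF : PowerSeries ℚ :=
  PowerSeries.mk fun n => if n = 0 then 0 else (n : ℚ) ^ (n - 2) / n.factorial

/-- `U(z) = T(z) - T(z)^2 / 2`. -/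
theorem treeGF_eq :
    treeGF = rootedTreeGF - PowerSeries.C (1 / 2 : ℚ) * rootedTreeGF ^ 2 := by
  ext n
  rw [map_sub]
  rw [show rootedTreeGF ^ 2 = rootedTreeGF * rootedTreeGF from sq rootedTreeGF]
  rw [show (PowerSeries.coeff n) (PowerSeries.C (1/2 : ℚ) * (rootedTreeGF * rootedTreeGF))
      = (1/2 : ℚ) * (PowerSeries.coeff n) (rootedTreeGF * rootedTreeGF) by
    rw [PowerSeries.coeff_C_mul]]
  rw [PowerSeries.coeff_mul]
  simp only [treeGF, rootedTreeGF, PowerSeries.coeff_mk]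
  rcases Nat.eq_zero_or_pos n with rfl | hn
  · simp
  · rw [Finset.Nat.sum_antidiagonal_eq_sum_range_succ_mk]
    have hfac : (n.factorial : ℚ) ≠ 0 := Nat.cast_ne_zero.mpr n.factorial_ne_zero
    have hS : ∑ k ∈ range (n+1),
        (if k = 0 then 0 else (k:ℚ)^(k-1)/k.factorial) *
        (if n-k = 0 then 0 else ((n-k:ℕ):ℚ)^(n-k-1)/(n-k).factorial)
        = (1/(n.factorial:ℚ)) * ∑ k ∈ range (n+1), (n.choose k : ℚ) * cc k * cc (n-k) := by
      rw [Finset.mul_sum]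
      apply Finset.sum_congr rfl
      intro k hk
      simp only [mem_range] at hk
      rcases eq_or_ne k 0 with rfl | hk0
      · simp [cc]
      · rcases eq_or_ne (n-k) 0 with he | hnk
        · simp [cc, he]
        · rw [if_neg hk0, if_neg hnk]
          simp only [cc, if_neg hk0, if_neg hnk]
          have hc := Nat.choose_mul_factorial_mul_factorial (by omega : k ≤ n)
          have hcq : (n.choose k : ℚ) * (k.factorial : ℚ) * ((n-k).factorial : ℚ)
              = (n.factorial : ℚ) := by
            rw [← Nat.cast_mul, ← Nat.cast_mul, hc]
          have hk2 : (k.factorial : ℚ) ≠ 0 := Nat.cast_ne_zero.mpr k.factorial_ne_zero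
          have hk3 : ((n-k).factorial : ℚ) ≠ 0 := Nat.cast_ne_zero.mpr (n-k).factorial_ne_zero
          field_simp
          rw [← hcq]; ring
    rw [if_neg (by omega : ¬ n = 0), if_neg (by omega : ¬ n = 0), hS, key n hn]
    rcases eq_or_ne n 1 with rfl | hn1
    · norm_num
    · have h2 : 2 ≤ n := by omega
      have hcast : ((n-1:ℕ):ℚ) = (n:ℚ) - 1 := by
        rw [Nat.cast_sub (by omega)]; norm_num
      have hpow : (n:ℚ)^(n-1) = (n:ℚ) * (n:ℚ)^(n-2) := by
        rw [← pow_succ']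
        congr 1
        omega
      rw [hcast, hpow]
      field_simp
      ring
end

section
/- For any fixed excess k ≥ 1, there are only finitely many isomorphism types (equivalently, finitely many labelled multigraphs up to the natural size bound) of multigraphs with minimum degree at least 3 and excess exactly k; in particular any such multigraph has at most 2k vertices and at most 3k edges. -/
open Finset

/-- The degree of vertex `v` in the multigraph on `Fin n` with labelled oriented edges
`ends : Fin m → Fin n × Fin n` (a loop counts twice). -/
def mgDeg {n m : ℕ} (ends : Fin m → Fin n × Fin n) (v : Fin n) : ℕ :=
  (univ.filter fun e => (ends e).1 = v).card + (univ.filter fun e => (ends e).2 = v).card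

lemma mgDeg_sum {n m : ℕ} (ends : Fin m → Fin n × Fin n) :
    ∑ v, mgDeg ends v = 2 * m := by
  unfold mgDeg
  rw [Finset.sum_add_distrib]
  have h1 : ∑ v, (univ.filter fun e => (ends e).1 = v).card = m := by
    rw [← Finset.card_eq_sum_card_fiberwise (f := fun e => (ends e).1) (fun x _ => mem_univ _)]
    simp
  have h2 : ∑ v, (univ.filter fun e => (ends e).2 = v).card = m := by
    rw [← Finset.card_eq_sum_card_fiberwise (f := fun e => (ends e).2) (fun x _ => mem_univ _)]
    simp
  rw [h1, h2]; ring

lemma mgBounds (k : ℕ) (n m : ℕ) (ends : Fin m → Fin n × Fin n)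
    (hd : ∀ v, 3 ≤ mgDeg ends v) (hm : m = n + k) : n ≤ 2 * k ∧ m ≤ 3 * k := by
  have h3 : 3 * n ≤ 2 * m := by
    calc 3 * n = ∑ _v : Fin n, 3 := by simp [mul_comm]
    _ ≤ ∑ v, mgDeg ends v := Finset.sum_le_sum fun v _ => hd v
    _ = 2 * m := mgDeg_sum ends
  constructor <;> omega

/-- For fixed excess `k ≥ 1` there are only finitely many (labelled) multigraphs with
minimum degree at least `3` and excess exactly `k`; in particular any such multigraph
has at most `2k` vertices and at most `3k` edges. -/
theorem minDegThree_fixed_excess_finite (k : ℕ) (hk : 1 ≤ k) :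
    Finite ((n : ℕ) × (m : ℕ) ×
        {ends : Fin m → Fin n × Fin n // (∀ v, 3 ≤ mgDeg ends v) ∧ m = n + k}) ∧
      ∀ (n m : ℕ) (ends : Fin m → Fin n × Fin n),
        (∀ v, 3 ≤ mgDeg ends v) → m = n + k → n ≤ 2 * k ∧ m ≤ 3 * k := by
  refine ⟨?_, fun n m ends hd hm => mgBounds k n m ends hd hm⟩
  let f : ((n : ℕ) × (m : ℕ) ×
      {ends : Fin m → Fin n × Fin n // (∀ v, 3 ≤ mgDeg ends v) ∧ m = n + k}) →
      Σ (n : Fin (2 * k + 1)) (m : Fin (3 * k + 1)), Fin m.val → Fin n.val × Fin n.val :=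
    fun ⟨n, m, ends, h⟩ =>
      ⟨⟨n, Nat.lt_succ_of_le (mgBounds k n m ends h.1 h.2).1⟩,
       ⟨m, Nat.lt_succ_of_le (mgBounds k n m ends h.1 h.2).2⟩, ends⟩
  apply Finite.of_injective f
  rintro ⟨n1, m1, e1, h1⟩ ⟨n2, m2, e2, h2⟩ h
  have hn : n1 = n2 := congrArg (fun x => x.1.val) h
  subst hn
  have hm : m1 = m2 := congrArg (fun x => x.2.1.val) h
  subst hm
  simp only [f, Sigma.mk.inj_iff, heq_eq_eq, true_and] at h
  subst h
  rfl
end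

section
/- For every fixed natural number d ≥ 1, there is a constant C such that for all sufficiently large k, Σ_{r=d}^{k−d} ((2(k−r)−1)!! (2r−1)!!)/(2k−1)!! ≤ C · k^{−d}. -/
/-- The double factorial `(2n-1)!! = (2n)!/(2^n n!)` as a real number. -/
noncomputable def ddf (n : ℕ) : ℝ := ((2 * n).factorial : ℝ) / (2 ^ n * n.factorial)

lemma ddf_pos (n : ℕ) : 0 < ddf n := by
  unfold ddf
  have h1 : (0:ℝ) < ((2*n).factorial : ℝ) := by exact_mod_cast (2*n).factorial_pos
  have h2 : (0:ℝ) < (n.factorial : ℝ) := by exact_mod_cast n.factorial_pos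
  positivity

lemma ddf_zero : ddf 0 = 1 := by simp [ddf]

lemma ddf_succ (n : ℕ) : ddf (n+1) = (2*n+1) * ddf n := by
  unfold ddf
  have h : 2 * (n+1) = (2*n+1) + 1 := by ring
  rw [h, Nat.factorial_succ, Nat.factorial_succ, Nat.factorial_succ]
  have h2 : (n.factorial : ℝ) ≠ 0 := by exact_mod_cast n.factorial_pos.ne'
  have h3 : (2:ℝ)^n ≠ 0 := by positivity
  field_simp
  push_cast
  ring

noncomputable def tt (k r : ℕ) : ℝ := ddf (k - r) * ddf r / ddf k

lemma tt_pos (k r : ℕ) : 0 < tt k r :=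
  div_pos (mul_pos (ddf_pos _) (ddf_pos _)) (ddf_pos _)

lemma tt_rec (k r m : ℕ) (h : k - r = m + 1) :
    tt k (r+1) * (2*m+1) = tt k r * (2*r+1) := by
  have h0 : k - (r+1) = m := by omega
  unfold tt
  rw [h0, h, ddf_succ m, ddf_succ r]
  push_cast
  ring

lemma tt_step_le (k r : ℕ) (h : 2*r+1 ≤ k) : tt k (r+1) ≤ tt k r := by
  obtain ⟨m, hm⟩ : ∃ m, k - r = m + 1 := ⟨k - r - 1, by omega⟩
  have hrec := tt_rec k r m hm
  have hrm : (2*r+1 : ℝ) ≤ (2*m+1 : ℝ) := by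
    have h' : (r:ℝ) ≤ m := by exact_mod_cast (show r ≤ m by omega)
    linarith
  have hpos : (0:ℝ) < 2*(m:ℝ)+1 := by positivity
  have h1 : tt k (r+1) * (2*(m:ℝ)+1) ≤ tt k r * (2*(m:ℝ)+1) := by
    have := (tt_pos k r).le
    calc tt k (r+1) * (2*(m:ℝ)+1) = tt k r * (2*(r:ℝ)+1) := by exact_mod_cast hrec
      _ ≤ tt k r * (2*(m:ℝ)+1) := by nlinarith
  exact le_of_mul_le_mul_right h1 hpos

lemma tt_anti (k a b : ℕ) (hab : a ≤ b) (hb : 2*b ≤ k+1) : tt k b ≤ tt k a := by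
  induction b, hab using Nat.le_induction with
  | base => exact le_rfl
  | succ n hn ih =>
      have h1 : 2*n+1 ≤ k := by omega
      exact (tt_step_le k n h1).trans (ih (by omega))

lemma tt_symm (k r : ℕ) (h : r ≤ k) : tt k (k - r) = tt k r := by
  unfold tt
  rw [show k - (k - r) = r by omega]
  ring

lemma tt_upper (k d j : ℕ) (hj : j ≤ d+1) (hk : 2*d+2 ≤ k) :
    tt k j ≤ ((2*(d:ℝ)+1)/k)^j := by
  induction j with
  | zero =>
      simp only [pow_zero]
      unfold tt
      rw [Nat.sub_zero, ddf_zero, mul_one, div_self (ddf_pos k).ne']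
  | succ j ih =>
      have hj' : j ≤ d := by omega
      have hkpos : (0:ℝ) < k := by exact_mod_cast (show 0 < k by omega)
      obtain ⟨m, hm⟩ : ∃ m, k - j = m + 1 := ⟨k - j - 1, by omega⟩
      have hrec := tt_rec k j m hm
      have hmk : (k:ℝ) ≤ 2*(m:ℝ)+1 := by
        have : k ≤ 2*m+1 := by omega
        exact_mod_cast this
      have hjd : (2*(j:ℝ)+1) ≤ 2*(d:ℝ)+1 := by
        have : (j:ℝ) ≤ d := by exact_mod_cast hj'
        linarith
      have hmpos : (0:ℝ) < 2*(m:ℝ)+1 := by positivity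
      have httj := ih (by omega)
      have hBnn : (0:ℝ) ≤ (2*(d:ℝ)+1)/k := by positivity
      have hratio : (2*(j:ℝ)+1)/(2*(m:ℝ)+1) ≤ (2*(d:ℝ)+1)/k := by
        apply div_le_div₀ (by positivity) hjd hkpos hmk
      have heq : tt k (j+1) = tt k j * ((2*(j:ℝ)+1)/(2*(m:ℝ)+1)) := by
        have : tt k (j+1) * (2*(m:ℝ)+1) = tt k j * (2*(j:ℝ)+1) := by exact_mod_cast hrec
        field_simp
        linarith [this]
      calc tt k (j+1) = tt k j * ((2*(j:ℝ)+1)/(2*(m:ℝ)+1)) := heq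
        _ ≤ ((2*(d:ℝ)+1)/k)^j * ((2*(d:ℝ)+1)/k) := by
            apply mul_le_mul httj hratio (by positivity) (by positivity)
        _ = ((2*(d:ℝ)+1)/k)^(j+1) := by rw [pow_succ]

/-- For every fixed `d ≥ 1` there is a constant `C` such that for all sufficiently
large `k`, `Σ_{r=d}^{k-d} (2(k-r)-1)!!(2r-1)!!/(2k-1)!! ≤ C k^{-d}`. -/
theorem sum_doubleFactorial_ratio_bound (d : ℕ) (hd : 1 ≤ d) :
    ∃ C : ℝ, ∃ K : ℕ, ∀ k : ℕ, K ≤ k →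
      ∑ r ∈ Finset.Icc d (k - d), ddf (k - r) * ddf r / ddf k ≤ C / (k : ℝ) ^ d := by
  refine ⟨(2*(d:ℝ)+3) * (2*(d:ℝ)+1)^d, 2*d+2, fun k hk => ?_⟩
  have hkpos : (0:ℝ) < k := by exact_mod_cast (show 0 < k by omega)
  set B : ℝ := (2*(d:ℝ)+1)/k with hB
  have hBnn : 0 ≤ B := by positivity
  -- split the sum
  have hset : Finset.Icc d (k-d) = insert d (insert (k-d) (Finset.Icc (d+1) (k-d-1))) := by
    ext x
    simp only [Finset.mem_Icc, Finset.mem_insert]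
    omega
  have hd_notin : d ∉ insert (k-d) (Finset.Icc (d+1) (k-d-1)) := by
    simp only [Finset.mem_insert, Finset.mem_Icc]
    omega
  have hkd_notin : (k-d) ∉ Finset.Icc (d+1) (k-d-1) := by
    simp only [Finset.mem_Icc]
    omega
  have hsum : ∑ r ∈ Finset.Icc d (k - d), ddf (k - r) * ddf r / ddf k
      = tt k d + (tt k (k-d) + ∑ r ∈ Finset.Icc (d+1) (k-d-1), tt k r) := by
    rw [hset, Finset.sum_insert hd_notin, Finset.sum_insert hkd_notin]
    rfl
  rw [hsum]
  -- endpoint bounds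
  have h1 : tt k d ≤ B^d := tt_upper k d d (by omega) hk
  have h2 : tt k (k-d) ≤ B^d := by
    rw [tt_symm k d (by omega)]; exact h1
  -- middle bound
  have hmid : ∀ r ∈ Finset.Icc (d+1) (k-d-1), tt k r ≤ B^(d+1) := by
    intro r hr
    rw [Finset.mem_Icc] at hr
    rcases le_or_gt (2*r) (k+1) with hcase | hcase
    · exact (tt_anti k (d+1) r hr.1 hcase).trans (tt_upper k d (d+1) le_rfl hk)
    · have hr' : r ≤ k := by omega
      rw [← tt_symm k r hr']
      have h1 : d+1 ≤ k - r := by omega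
      have h2 : 2*(k-r) ≤ k+1 := by omega
      exact (tt_anti k (d+1) (k-r) h1 h2).trans (tt_upper k d (d+1) le_rfl hk)
  have hcard : ((Finset.Icc (d+1) (k-d-1)).card : ℝ) ≤ (k:ℝ) := by
    have : (Finset.Icc (d+1) (k-d-1)).card ≤ k := by
      rw [Nat.card_Icc]; omega
    exact_mod_cast this
  have h3 : ∑ r ∈ Finset.Icc (d+1) (k-d-1), tt k r ≤ (k:ℝ) * B^(d+1) := by
    calc ∑ r ∈ Finset.Icc (d+1) (k-d-1), tt k r
        ≤ (Finset.Icc (d+1) (k-d-1)).card • B^(d+1) := Finset.sum_le_card_nsmul _ _ _ hmid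
      _ = ((Finset.Icc (d+1) (k-d-1)).card : ℝ) * B^(d+1) := by rw [nsmul_eq_mul]
      _ ≤ (k:ℝ) * B^(d+1) := by
          apply mul_le_mul_of_nonneg_right hcard (by positivity)
  -- combine
  have hkB : (k:ℝ) * B^(d+1) = (2*(d:ℝ)+1) * B^d := by
    rw [pow_succ, hB]
    field_simp
  have hBd : B^d = (2*(d:ℝ)+1)^d / (k:ℝ)^d := by
    rw [hB, div_pow]
  calc tt k d + (tt k (k-d) + ∑ r ∈ Finset.Icc (d+1) (k-d-1), tt k r)
      ≤ B^d + (B^d + (k:ℝ) * B^(d+1)) := by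
        gcongr
    _ = (2*(d:ℝ)+3) * (2*(d:ℝ)+1)^d / (k:ℝ)^d := by
        rw [hkB, hBd]; field_simp; ring
end
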